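/- arXiv:2411.02111 — 3 statements merged into one kernel-verified Lean document; each statement's English description precedes it below -/
import Mathlib

section
/- Let CG_n be the multigraph obtained from the cycle graph C_n with vertices p₁, …, p_n by replacing each edge e_i (joining p_i and p_{i+1}, indices mod n) by a connected multigraph G_i in which two distinguished vertices s_i and t_i are identified with the endpoints of e_i. Then t(CG_n) = ( ∏_{i=1}^{n} t(G_i) ) · Σ_{i=1}^{n} t(G_{i, s_i t_i})/t(G_i), where G_{i, s_i t_i} is obtained from G_i by identifying s_i and t_i. In particular, if every G_i is a copy of the same graph G with fixed vertices s, t, then t(CG_n) = n·t(G)^{n−1}·t(G_{st}). -/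
open scoped Classical

/-- A finite weighted multigraph (resistive electrical network): finitely many
vertices and edges; each edge `e` has two endpoints `ends e` and a positive
length (resistance) `len e`.  Multiple edges and self-loops are allowed. -/
structure WMG where
  V : Type
  E : Type
  instV : Fintype V
  instE : Fintype E
  ends : E → V × V
  len : E → ℝ
  len_pos : ∀ e, 0 < len e

attribute [instance] WMG.instV WMG.instE

/-- The Moore–Penrose pseudoinverse of a real square matrix, characterized by
the four Penrose equations (it exists and is unique for real matrices). -/
noncomputable def Matrix.mpinv {n : Type} [Fintype n] (A : Matrix n n ℝ) : Matrix n n ℝ :=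
  if h : ∃ B : Matrix n n ℝ,
      A * B * A = A ∧ B * A * B = B ∧ Matrix.transpose (A * B) = A * B ∧ Matrix.transpose (B * A) = B * A
  then h.choose else 0

namespace WMG

/-- Indicator function. -/
noncomputable def ind {α : Type} (x y : α) : ℝ := if x = y then 1 else 0

/-- The weighted Laplacian: an edge `e` with endpoints `a, b` contributes
`(1/len e) * (δ_{ua} - δ_{ub}) * (δ_{va} - δ_{vb})` to the `(u,v)` entry.  So
the off-diagonal `(u,v)` entry is `-∑ 1/len e` over the edges joining `u` and
`v`, and all row sums are zero. -/
noncomputable def lap (G : WMG) : Matrix G.V G.V ℝ :=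
  ∑ e : G.E, (G.len e)⁻¹ •
    Matrix.of (fun u v : G.V =>
      (ind u (G.ends e).1 - ind u (G.ends e).2) *
      (ind v (G.ends e).1 - ind v (G.ends e).2))

/-- Effective resistance `r(p,q) = L⁺pp - 2·L⁺pq + L⁺qq`. -/
noncomputable def res (G : WMG) (p q : G.V) : ℝ :=
  G.lap.mpinv p p - 2 * G.lap.mpinv p q + G.lap.mpinv q q

/-- Voltage function `j_p(q,s) = L⁺pp - L⁺pq - L⁺ps + L⁺qs`. -/
noncomputable def volt (G : WMG) (p q s : G.V) : ℝ :=
  G.lap.mpinv p p - G.lap.mpinv p q - G.lap.mpinv p s + G.lap.mpinv q s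

/-- Two vertices are adjacent if some edge has them as its endpoints. -/
def Adj (G : WMG) (u v : G.V) : Prop :=
  ∃ e : G.E, G.ends e = (u, v) ∨ G.ends e = (v, u)

/-- `u` and `v` are joined by a walk in `G`. -/
def Reach (G : WMG) (u v : G.V) : Prop := Relation.ReflTransGen G.Adj u v

/-- `G` is connected. -/
def Connected (G : WMG) : Prop := Nonempty G.V ∧ ∀ u v : G.V, G.Reach u v

/-- Quotient graph: identify vertices along (the equivalence generated by) the
relation `r`; all edges are kept. -/
noncomputable def quot (G : WMG) (r : G.V → G.V → Prop) : WMG where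
  V := Quot r
  E := G.E
  instV := Fintype.ofFinite _
  instE := G.instE
  ends e := (Quot.mk r (G.ends e).1, Quot.mk r (G.ends e).2)
  len := G.len
  len_pos := G.len_pos

/-- The canonical map from the vertices of `G` to those of a quotient of `G`. -/
def quotMap (G : WMG) (r : G.V → G.V → Prop) : G.V → (G.quot r).V := Quot.mk r

/-- `G_{pq}`: identify the vertices `p` and `q`. -/
noncomputable def ident2 (G : WMG) (p q : G.V) : WMG :=
  G.quot (fun x y => x = p ∧ y = q)

def ident2Map (G : WMG) (p q : G.V) : G.V → (G.ident2 p q).V :=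
  G.quotMap _

/-- `G_{pqs}`: identify the vertices `p`, `q`, `s` into a single vertex. -/
noncomputable def ident3 (G : WMG) (p q s : G.V) : WMG :=
  G.quot (fun x y => (x = p ∧ y = q) ∨ (x = p ∧ y = s))

/-- `G_{pq,st}`: identify `p` with `q` and, separately, `s` with `t`. -/
noncomputable def ident22 (G : WMG) (p q s t : G.V) : WMG :=
  G.quot (fun x y => (x = p ∧ y = q) ∨ (x = s ∧ y = t))

/-- `G_S`: identify all vertices in the set `S` into a single vertex. -/
noncomputable def identSet (G : WMG) (S : Set G.V) : WMG :=
  G.quot (fun x y => x ∈ S ∧ y ∈ S)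

/-- `G − e`: delete the edge `e` (keeping all vertices). -/
noncomputable def delete (G : WMG) (e : G.E) : WMG where
  V := G.V
  E := {f : G.E // f ≠ e}
  instV := G.instV
  instE := Fintype.ofFinite _
  ends f := G.ends f.1
  len f := G.len f.1
  len_pos f := G.len_pos f.1

/-- `e` is a bridge if `G − e` is disconnected. -/
def IsBridge (G : WMG) (e : G.E) : Prop := ¬ (G.delete e).Connected

/-- `Ḡ_e`: contract the edge `e` (identify its endpoints and delete it). -/
noncomputable def contract (G : WMG) (e : G.E) : WMG :=
  (G.delete e).quot (fun x y => x = (G.ends e).1 ∧ y = (G.ends e).2)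

def contractMap (G : WMG) (e : G.E) : G.V → (G.contract e).V := Quot.mk _

/-- Replace the length of the edge `e` by `L'`. -/
noncomputable def setLen (G : WMG) (e : G.E) (L' : ℝ) (hL' : 0 < L') : WMG where
  V := G.V
  E := G.E
  instV := G.instV
  instE := G.instE
  ends := G.ends
  len f := if f = e then L' else G.len f
  len_pos f := by
    by_cases hf : f = e
    · simpa [hf] using hL'
    · simpa [hf] using G.len_pos f

/-- `T` is (the edge set of) a spanning tree of `G`: using only edges of `T`
any two vertices are joined, and `T` has (number of vertices) − 1 edges. -/
def IsSpanningTree (G : WMG) (T : Finset G.E) : Prop :=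
  (∀ u v : G.V, Relation.ReflTransGen
      (fun x y => ∃ e ∈ T, G.ends e = (x, y) ∨ G.ends e = (y, x)) u v) ∧
  T.card = Fintype.card G.V - 1

/-- `t G`: the number of spanning trees of `G` (equals `1` for a one-vertex
graph; self-loops contribute nothing). -/
noncomputable def t (G : WMG) : ℕ := Nat.card {T : Finset G.E // G.IsSpanningTree T}

/-- `t(G_{pq})`, with the convention `t(G_{pp}) = 0`. -/
noncomputable def t2 (G : WMG) (p q : G.V) : ℕ :=
  if p = q then 0 else (G.ident2 p q).t

/-- Disjoint union of two graphs. -/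
noncomputable def disjUnion (G₁ G₂ : WMG) : WMG where
  V := G₁.V ⊕ G₂.V
  E := G₁.E ⊕ G₂.E
  instV := inferInstance
  instE := inferInstance
  ends := Sum.elim (fun e => (Sum.inl (G₁.ends e).1, Sum.inl (G₁.ends e).2))
                   (fun e => (Sum.inr (G₂.ends e).1, Sum.inr (G₂.ends e).2))
  len := Sum.elim G₁.len G₂.len
  len_pos := by
    rintro (e | e)
    · exact G₁.len_pos e
    · exact G₂.len_pos e

/-- Glue `G₁` and `G₂` along two pairs of vertices (`p₁ ↔ p₂`, `q₁ ↔ q₂`):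
the result is the graph `G = G₁ ∪ G₂` with `G₁ ∩ G₂ = {p, q}` (the two pieces
share exactly these two vertices and no edges). -/
noncomputable def glue2 (G₁ G₂ : WMG) (p₁ q₁ : G₁.V) (p₂ q₂ : G₂.V) : WMG :=
  (G₁.disjUnion G₂).quot (fun x y =>
    (x = Sum.inl p₁ ∧ y = Sum.inr p₂) ∨ (x = Sum.inl q₁ ∧ y = Sum.inr q₂))

/-- Glue `G₁` and `G₂` along three pairs of vertices: the result is the graph
`G = G₁ ∪ G₂` with `G₁ ∩ G₂ = {p, q, s}`. -/
noncomputable def glue3 (G₁ G₂ : WMG) (p₁ q₁ s₁ : G₁.V) (p₂ q₂ s₂ : G₂.V) : WMG :=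
  (G₁.disjUnion G₂).quot (fun x y =>
    (x = Sum.inl p₁ ∧ y = Sum.inr p₂) ∨ (x = Sum.inl q₁ ∧ y = Sum.inr q₂) ∨
    (x = Sum.inl s₁ ∧ y = Sum.inr s₂))

/-- Disjoint union of a finite family of graphs. -/
noncomputable def sigmaGraph {k : ℕ} (G : Fin k → WMG) : WMG where
  V := Σ i, (G i).V
  E := Σ i, (G i).E
  instV := inferInstance
  instE := inferInstance
  ends e := (⟨e.1, ((G e.1).ends e.2).1⟩, ⟨e.1, ((G e.1).ends e.2).2⟩)
  len e := (G e.1).len e.2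
  len_pos e := (G e.1).len_pos e.2

/-- Glue the family `G i` along a common pair of vertices (all the `p i` are
identified together, and all the `q i` are identified together): the result is
`G = ⋃ G_i` with `G_i ∩ G_j = {p, q}` for all `i ≠ j`. -/
noncomputable def glueFam {k : ℕ} (G : Fin k → WMG) (p q : ∀ i, (G i).V) : WMG :=
  (sigmaGraph G).quot (fun x y =>
    (∃ i j, x = ⟨i, p i⟩ ∧ y = ⟨j, p j⟩) ∨ (∃ i j, x = ⟨i, q i⟩ ∧ y = ⟨j, q j⟩))

/-- The cyclic successor on `Fin k`. -/
def finSucc {k : ℕ} (i : Fin k) : Fin k :=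
  ⟨(i.1 + 1) % k, Nat.mod_lt _ (Nat.lt_of_le_of_lt (Nat.zero_le _) i.2)⟩

/-- `CG_k`: replace the `i`-th edge of the cycle `C_k` by the graph `G i`,
identifying `t i` (of `G i`) with `s (i+1)` (of `G (i+1)`), cyclically. -/
noncomputable def cycleGlue {k : ℕ} (G : Fin k → WMG) (s t : ∀ i, (G i).V) : WMG :=
  (sigmaGraph G).quot (fun x y =>
    ∃ i, x = ⟨i, t i⟩ ∧ y = ⟨finSucc i, s (finSucc i)⟩)

/-- Join a new vertex `u` (the vertex `none`) to the vertex `p i` of `H` by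
`a i` parallel unit edges, for each `i`.  The resulting graph `G` has `H = G − u`,
and if `p` is injective with all `a i ≥ 1` then `N_G(u) = {p 1, …, p n}` with
`a i` parallel edges joining `u` to `p i`. -/
noncomputable def cone (H : WMG) {n : ℕ} (p : Fin n → H.V) (a : Fin n → ℕ) : WMG where
  V := Option H.V
  E := H.E ⊕ (Σ i : Fin n, Fin (a i))
  instV := inferInstance
  instE := inferInstance
  ends := Sum.elim (fun e => (some (H.ends e).1, some (H.ends e).2))
                   (fun e => (none, some (p e.1)))
  len := Sum.elim H.len (fun _ => 1)
  len_pos := by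
    rintro (e | e)
    · exact H.len_pos e
    · exact one_pos

/-- The path graph `P_n` on `n` vertices `0, 1, …, n-1`, unit edge lengths. -/
noncomputable def path (n : ℕ) : WMG where
  V := Fin n
  E := Fin (n - 1)
  instV := inferInstance
  instE := inferInstance
  ends i := (⟨i.1, by have := i.2; omega⟩, ⟨i.1 + 1, by have := i.2; omega⟩)
  len _ := 1
  len_pos _ := one_pos

/-- The cycle graph `C_n` on `n` vertices, unit edge lengths. -/
noncomputable def cycle (n : ℕ) : WMG where
  V := Fin n
  E := Fin n
  instV := inferInstance
  instE := inferInstance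
  ends i := (i, finSucc i)
  len _ := 1
  len_pos _ := one_pos

/-- The modified fan graph `F̄an_n`: the path `P_n` together with one new hub
vertex joined to each path vertex by `a` parallel edges. -/
noncomputable def fanGraph (n a : ℕ) : WMG :=
  (path n).cone (fun i : Fin n => i) (fun _ => a)

/-- The modified wheel graph `W̄_n`: the cycle `C_n` together with one new hub
vertex joined to each cycle vertex by `a` parallel edges. -/
noncomputable def wheelGraph (n a : ℕ) : WMG :=
  (cycle n).cone (fun i : Fin n => i) (fun _ => a)

end WMG

/-- The Morgan–Voyce polynomial `B_m(x) = ∑_{k=0}^m C(m+k+1, m−k) x^k`. -/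
noncomputable def morganVoyce (m : ℕ) (x : ℝ) : ℝ :=
  ∑ k ∈ Finset.range (m + 1), (Nat.choose (m + k + 1) (m - k) : ℝ) * x ^ k

/-- The polynomial `W_m(x) = ∑_{k=0}^m ((2m+2)/(m+2+k)) C(m+2+k, m−k) x^k`. -/
noncomputable def wheelPoly (m : ℕ) (x : ℝ) : ℝ :=
  ∑ k ∈ Finset.range (m + 1),
    ((2 * m + 2 : ℝ) / (m + 2 + k : ℝ)) * (Nat.choose (m + 2 + k) (m - k) : ℝ) * x ^ k

/-- The Lucas numbers: `L₀ = 2`, `L₁ = 1`, `L_{m+2} = L_m + L_{m+1}`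
(so `L₂ = 3`). -/
def lucas : ℕ → ℕ
  | 0 => 2
  | 1 => 1
  | n + 2 => lucas n + lucas (n + 1)



section SpanningAux
open Relation Finset


section AbstractGraph

variable {V E : Type}

/-- adjacency through an allowed edge set -/
def eadj (f : E → V × V) (T : Finset E) (x y : V) : Prop :=
  ∃ e ∈ T, f e = (x, y) ∨ f e = (y, x)

theorem eadj_symm {f : E → V × V} {T : Finset E} : Symmetric (eadj f T) := by
  rintro x y ⟨e, he, h | h⟩
  · exact ⟨e, he, Or.inr h⟩
  · exact ⟨e, he, Or.inl h⟩

theorem ereach_symm {f : E → V × V} {T : Finset E} {x y : V}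
    (h : ReflTransGen (eadj f T) x y) : ReflTransGen (eadj f T) y x :=
  (@ReflTransGen.symmetric _ _ ⟨fun _ _ h => eadj_symm h⟩).symm _ _ h

/-- two-point identification relation -/
def tpRel (a b : V) : V → V → Prop := fun x y => x = a ∧ y = b

noncomputable def tpEquiv (a b : V) (hab : a ≠ b) :
    Quot (tpRel a b) ≃ {v : V // v ≠ a} where
  toFun := Quot.lift (fun v => if hv : v = a then ⟨b, Ne.symm hab⟩ else ⟨v, hv⟩) (by
    rintro x y ⟨rfl, rfl⟩
    rw [dif_pos rfl, dif_neg (Ne.symm hab)])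
  invFun v := Quot.mk _ v.1
  left_inv := by
    apply Quot.ind
    intro x
    by_cases hx : x = a
    · subst hx
      simp only [dif_pos rfl]
      exact (Quot.sound ⟨rfl, rfl⟩).symm
    · simp only [dif_neg hx]
  right_inv := by
    rintro ⟨v, hv⟩
    simp only [dif_neg hv]

theorem card_ne_add_one [Fintype V] (a : V) :
    Fintype.card {v : V // v ≠ a} + 1 = Fintype.card V := by
  have h1 : Fintype.card V = Fintype.card ({v : V // v = a} ⊕ {v : V // ¬ v = a}) :=
    (Fintype.card_congr (Equiv.sumCompl (· = a))).symm
  rw [Fintype.card_sum, Fintype.card_subtype_eq] at h1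
  simp only [ne_eq]
  omega

theorem reach_lift {r A : V → V → Prop} (hA : Symmetric A)
    (hr : ∀ x y, r x y → ReflTransGen A x y)
    {B : Quot r → Quot r → Prop}
    (hB : ∀ α β, B α β → ∃ x y, Quot.mk r x = α ∧ Quot.mk r y = β ∧ ReflTransGen A x y)
    {u v : V} (h : ReflTransGen B (Quot.mk r u) (Quot.mk r v)) :
    ReflTransGen A u v := by
  have hmk : ∀ x y : V, Quot.mk r x = Quot.mk r y → ReflTransGen A x y := by
    intro x y hxy
    have hq := Quot.eqvGen_exact hxy
    clear hxy
    induction hq with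
    | rel x y h' => exact hr _ _ h'
    | refl => exact ReflTransGen.refl
    | symm x y _ ih => exact (@ReflTransGen.symmetric _ _ ⟨fun _ _ h => hA h⟩).symm _ _ ih
    | trans x y z _ _ ih1 ih2 => exact ih1.trans ih2
  have main : ∀ γ, ReflTransGen B (Quot.mk r u) γ → ∀ w, Quot.mk r w = γ → ReflTransGen A u w := by
    intro γ hγ
    induction hγ with
    | refl => intro w hw; exact hmk u w hw.symm
    | tail _ hstep ih =>
        intro w hw
        obtain ⟨x, y, hx, hy, hxy⟩ := hB _ _ hstep
        exact ((ih x hx).trans hxy).trans (hmk y w (hy.trans hw.symm))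
  exact main _ h v rfl

theorem exists_ne_step {A : V → V → Prop} {u v : V}
    (h : ReflTransGen A u v) (huv : u ≠ v) : ∃ a b, A a b ∧ a ≠ b := by
  induction h with
  | refl => exact (huv rfl).elim
  | @tail b c _ h2 ih =>
      by_cases hbc : b = c
      · exact ih (hbc ▸ huv)
      · exact ⟨b, c, h2, hbc⟩

theorem card_le_of_span : ∀ (k : ℕ) (V : Type) [Fintype V] (E : Type) (f : E → V × V)
    (T : Finset E), T.card ≤ k → (∀ u v : V, ReflTransGen (eadj f T) u v) →
    Fintype.card V ≤ k + 1 := by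
  intro k
  induction k with
  | zero =>
      intro V _ E f T hTc h
      have hT : T = ∅ := Finset.card_eq_zero.mp (le_antisymm hTc (Nat.zero_le _))
      subst hT
      refine Fintype.card_le_one_iff.mpr fun u v => ?_
      have hr := h u v
      induction hr with
      | refl => rfl
      | tail _ h2 _ => obtain ⟨e, he, _⟩ := h2; simp at he
  | succ k ih =>
      intro V instV E f T hTc h
      by_cases hV : Fintype.card V ≤ 1
      · omega
      · obtain ⟨u, v, huv⟩ := Fintype.exists_pair_of_one_lt_card (α := V) (by omega)
        obtain ⟨x, y, hxy, hne⟩ := exists_ne_step (h u v) huv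
        obtain ⟨e, heT, hfe⟩ := hxy
        have hab : (f e).1 ≠ (f e).2 := by
          rcases hfe with h' | h'
          · rw [h']; exact hne
          · rw [h']; exact hne.symm
        set a := (f e).1 with ha
        set b := (f e).2 with hb
        haveI : Fintype (Quot (tpRel a b)) := Fintype.ofEquiv _ (tpEquiv a b hab).symm
        have hcard : Fintype.card (Quot (tpRel a b)) + 1 = Fintype.card V := by
          rw [Fintype.card_congr (tpEquiv a b hab)]
          exact card_ne_add_one a
        have h' : ∀ α β : Quot (tpRel a b),
            ReflTransGen (eadj (fun e' => (Quot.mk (tpRel a b) (f e').1,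
              Quot.mk (tpRel a b) (f e').2)) (T.erase e)) α β := by
          apply Quot.ind; intro u'; apply Quot.ind; intro v'
          refine ReflTransGen.lift' (Quot.mk (tpRel a b)) ?_ _ _ (h u' v')
          rintro p q ⟨e', he', hpq⟩
          dsimp only [Function.onFun]
          by_cases hee : e' = e
          · subst hee
            have hmk : Quot.mk (tpRel a b) a = Quot.mk (tpRel a b) b :=
              Quot.sound ⟨rfl, rfl⟩
            have hpq' : Quot.mk (tpRel a b) p = Quot.mk (tpRel a b) q := by
              rcases hpq with h'' | h''
              · rw [show p = a from by rw [ha, h''], show q = b from by rw [hb, h'']]; exact hmk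
              · rw [show p = b from by rw [hb, h''], show q = a from by rw [ha, h'']]
                exact hmk.symm
            rw [hpq']
          · refine ReflTransGen.single ⟨e', Finset.mem_erase.mpr ⟨hee, he'⟩, ?_⟩
            rcases hpq with h'' | h''
            · left; simp [h'']
            · right; simp [h'']
        have hfin := ih (Quot (tpRel a b)) E _ (T.erase e)
          (by rw [Finset.card_erase_of_mem heT]; omega) h'
        omega

theorem exists_span : ∀ (N : ℕ) (V : Type) [Fintype V] [Nonempty V] (E : Type) [Fintype E]
    (f : E → V × V), Fintype.card V ≤ N →
    (∀ u v : V, ReflTransGen (fun x y => ∃ e, f e = (x, y) ∨ f e = (y, x)) u v) →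
    ∃ T : Finset E, (∀ u v, ReflTransGen (eadj f T) u v) ∧ T.card + 1 = Fintype.card V := by
  intro N
  induction N with
  | zero =>
      intro V _ _ E _ f hN _
      have := Fintype.card_pos (α := V)
      omega
  | succ N ih =>
      intro V instV instNe E instE f hN h
      by_cases h1 : Fintype.card V ≤ 1
      · refine ⟨∅, fun u v => ?_, ?_⟩
        · haveI : Subsingleton V := Fintype.card_le_one_iff_subsingleton.mp h1
          rw [Subsingleton.elim u v]
        · have := Fintype.card_pos (α := V)
          rw [Finset.card_empty]; omega
      · obtain ⟨u, v, huv⟩ := Fintype.exists_pair_of_one_lt_card (α := V) (by omega)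
        obtain ⟨x, y, hxy, hne⟩ := exists_ne_step (h u v) huv
        obtain ⟨e, hfe⟩ := hxy
        have hab : (f e).1 ≠ (f e).2 := by
          rcases hfe with h' | h'
          · rw [h']; exact hne
          · rw [h']; exact hne.symm
        set a := (f e).1 with ha
        set b := (f e).2 with hb
        haveI : Fintype (Quot (tpRel a b)) := Fintype.ofEquiv _ (tpEquiv a b hab).symm
        haveI : Nonempty (Quot (tpRel a b)) := ⟨Quot.mk _ a⟩
        have hcard : Fintype.card (Quot (tpRel a b)) + 1 = Fintype.card V := by
          rw [Fintype.card_congr (tpEquiv a b hab)]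
          exact card_ne_add_one a
        set f' : {e' : E // e' ≠ e} → Quot (tpRel a b) × Quot (tpRel a b) :=
          fun e' => (Quot.mk (tpRel a b) (f e'.1).1, Quot.mk (tpRel a b) (f e'.1).2) with hf'
        have hconn' : ∀ α β : Quot (tpRel a b),
            ReflTransGen (fun x y => ∃ e', f' e' = (x, y) ∨ f' e' = (y, x)) α β := by
          apply Quot.ind; intro u'; apply Quot.ind; intro v'
          refine ReflTransGen.lift' (Quot.mk (tpRel a b)) ?_ _ _ (h u' v')
          rintro p q ⟨e', hpq⟩
          dsimp only [Function.onFun]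
          by_cases hee : e' = e
          · subst hee
            have hmk : Quot.mk (tpRel a b) a = Quot.mk (tpRel a b) b :=
              Quot.sound ⟨rfl, rfl⟩
            have hpq' : Quot.mk (tpRel a b) p = Quot.mk (tpRel a b) q := by
              rcases hpq with h'' | h''
              · rw [show p = a from by rw [ha, h''], show q = b from by rw [hb, h'']]; exact hmk
              · rw [show p = b from by rw [hb, h''], show q = a from by rw [ha, h'']]
                exact hmk.symm
            rw [hpq']
          · refine ReflTransGen.single ⟨⟨e', hee⟩, ?_⟩
            rcases hpq with h'' | h''
            · left; simp [hf', h'']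
            · right; simp [hf', h'']
        obtain ⟨T', hT'span, hT'card⟩ := ih (Quot (tpRel a b)) {e' : E // e' ≠ e} f'
          (by omega) hconn'
        refine ⟨insert e (T'.image Subtype.val), fun p q => ?_, ?_⟩
        · refine reach_lift (r := tpRel a b) eadj_symm ?_ ?_ (hT'span (Quot.mk _ p) (Quot.mk _ q))
          · rintro x y ⟨rfl, rfl⟩
            exact ReflTransGen.single ⟨e, Finset.mem_insert_self _ _, Or.inl rfl⟩
          · rintro α β ⟨e', he', hpq⟩
            have hmem : e'.1 ∈ insert e (T'.image Subtype.val) :=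
              Finset.mem_insert_of_mem (Finset.mem_image.mpr ⟨e', he', rfl⟩)
            rcases hpq with h'' | h''
            · exact ⟨(f e'.1).1, (f e'.1).2, congrArg Prod.fst h'', congrArg Prod.snd h'',
                ReflTransGen.single ⟨e'.1, hmem, Or.inl rfl⟩⟩
            · exact ⟨(f e'.1).2, (f e'.1).1, congrArg Prod.snd h'', congrArg Prod.fst h'',
                ReflTransGen.single ⟨e'.1, hmem, Or.inr rfl⟩⟩
        · have hni : e ∉ T'.image Subtype.val := by
            simp only [Finset.mem_image]
            rintro ⟨⟨e', hne'⟩, _, heq⟩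
            exact hne' heq
          rw [Finset.card_insert_of_notMem hni,
            Finset.card_image_of_injective _ Subtype.val_injective]
          omega

end AbstractGraph

section ModAux

theorem modtwo {n x : ℕ} (h : x < 2 * n) : x % n = if x < n then x else x - n := by
  split_ifs with h'
  · exact Nat.mod_eq_of_lt h'
  · rw [Nat.mod_eq_sub_mod (by omega), Nat.mod_eq_of_lt (by omega)]

theorem mod_d_eq_zero_iff {n j m : ℕ} (hj : j < n) (hm : m < n) :
    (m + n - j) % n = 0 ↔ m = j := by
  rw [modtwo (by omega)]
  split_ifs with h <;> omega

theorem mod_d_inj {n j m m' : ℕ} (hj : j < n) (hm : m < n) (hm' : m' < n)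
    (h : (m + n - j) % n = (m' + n - j) % n) : m = m' := by
  rw [modtwo (by omega), modtwo (by omega)] at h
  split_ifs at h <;> omega

theorem mod_d_succ {n j m : ℕ} (hj : j < n) (hm : m < n) :
    ((m + 1) % n + n - j) % n = ((m + n - j) % n + 1) % n := by
  rw [modtwo (x := m + 1) (by omega), modtwo (x := m + n - j) (by omega)]
  split_ifs with h1 h2 <;>
    rw [modtwo (by omega), modtwo (by omega)] <;> split_ifs <;> omega

theorem mod_d_lt {n j m : ℕ} (hj : j < n) (hm : m < n) : (m + n - j) % n < n :=
  Nat.mod_lt _ (by omega)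

end ModAux

namespace WMG

theorem connected_exists_spanningTree (H : WMG) (h : H.Connected) :
    ∃ T, H.IsSpanningTree T := by
  obtain ⟨hne, hreach⟩ := h
  obtain ⟨T, hspan, hcard⟩ :=
    exists_span (Fintype.card H.V) H.V H.E H.ends le_rfl hreach
  exact ⟨T, hspan, by omega⟩

theorem t_pos (H : WMG) (h : H.Connected) : 0 < H.t := by
  obtain ⟨T, hT⟩ := connected_exists_spanningTree H h
  have : Nonempty {T : Finset H.E // H.IsSpanningTree T} := ⟨⟨T, hT⟩⟩
  exact Nat.card_pos

end WMG

section Main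

open WMG

variable {n : ℕ} (G : Fin n → WMG) (s t : ∀ i, (G i).V)

/-- the gluing relation of `cycleGlue` -/
def cgRel : (Σ i, (G i).V) → (Σ i, (G i).V) → Prop :=
  fun x y => ∃ i, x = ⟨i, t i⟩ ∧ y = ⟨finSucc i, s (finSucc i)⟩

def mkc : (Σ i, (G i).V) → (cycleGlue G s t).V := Quot.mk (cgRel G s t)

theorem cg_ends (e : Σ i, (G i).E) :
    (cycleGlue G s t).ends e =
      (mkc G s t ⟨e.1, ((G e.1).ends e.2).1⟩, mkc G s t ⟨e.1, ((G e.1).ends e.2).2⟩) := rfl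

def mk2 (i : Fin n) : (G i).V → ((G i).ident2 (s i) (t i)).V := Quot.mk _

theorem i2_ends (i : Fin n) (e : (G i).E) :
    ((G i).ident2 (s i) (t i)).ends e =
      (mk2 G s t i ((G i).ends e).1, mk2 G s t i ((G i).ends e).2) := rfl

theorem finSucc_ne (hn : 2 ≤ n) (i : Fin n) : finSucc i ≠ i := by
  intro h
  have hv := congrArg Fin.val h
  have h2 := i.2
  rcases Nat.lt_or_ge (i.1 + 1) n with h' | h'
  · rw [show (finSucc i).1 = (i.1 + 1) % n from rfl, Nat.mod_eq_of_lt h'] at hv; omega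
  · have hin : i.1 + 1 = n := by omega
    rw [show (finSucc i).1 = (i.1 + 1) % n from rfl, hin, Nat.mod_self] at hv; omega

/-- normal form for vertices of the cycle gluing -/
noncomputable def cNorm : (Σ i, (G i).V) → (Σ i, (G i).V) :=
  fun x => if h : x.2 = t x.1 then ⟨finSucc x.1, s (finSucc x.1)⟩ else x

theorem cNorm_mk (x : Σ i, (G i).V) : mkc G s t (cNorm G s t x) = mkc G s t x := by
  by_cases h : x.2 = t x.1
  · rw [cNorm, dif_pos h]
    refine (Quot.sound ⟨x.1, ?_, rfl⟩).symm
    exact Sigma.ext rfl (by rw [h])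
  · rw [cNorm, dif_neg h]

theorem cNorm_ne (hst : ∀ i, s i ≠ t i) (x : Σ i, (G i).V) : (cNorm G s t x).2 ≠ t (cNorm G s t x).1 := by
  by_cases h : x.2 = t x.1
  · rw [cNorm, dif_pos h]
    exact hst (finSucc x.1)
  · rw [cNorm, dif_neg h]
    exact h

theorem cNorm_respects (hst : ∀ i, s i ≠ t i) (x y : Σ i, (G i).V) (h : cgRel G s t x y) :
    cNorm G s t x = cNorm G s t y := by
  obtain ⟨i, rfl, rfl⟩ := h
  dsimp only [cNorm]
  rw [dif_pos rfl, dif_neg (hst (finSucc i))]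

noncomputable def cEquiv (hst : ∀ i, s i ≠ t i) : (cycleGlue G s t).V ≃ {x : Σ i, (G i).V // x.2 ≠ t x.1} where
  toFun := Quot.lift (fun x => ⟨cNorm G s t x, cNorm_ne G s t hst x⟩)
    (fun x y h => Subtype.ext (cNorm_respects G s t hst x y h))
  invFun x := mkc G s t x.1
  left_inv := by
    apply Quot.ind
    intro x
    exact cNorm_mk G s t x
  right_inv := by
    rintro ⟨x, hx⟩
    apply Subtype.ext
    show cNorm G s t x = x
    rw [cNorm, dif_neg hx]

noncomputable def cEquiv2 : {x : Σ i, (G i).V // x.2 ≠ t x.1} ≃ Σ i, {v : (G i).V // v ≠ t i} where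
  toFun := fun x => ⟨x.1.1, ⟨x.1.2, x.2⟩⟩
  invFun := fun x => ⟨⟨x.1, x.2.1⟩, x.2.2⟩
  left_inv := by rintro ⟨⟨i, v⟩, h⟩; rfl
  right_inv := by rintro ⟨i, v, h⟩; rfl

theorem card_CG (hst : ∀ i, s i ≠ t i) : Fintype.card (cycleGlue G s t).V + n = ∑ i, Fintype.card (G i).V := by
  rw [Fintype.card_congr ((cEquiv G s t hst).trans (cEquiv2 G t))]
  rw [Fintype.card_sigma]
  have : ∀ i : Fin n, Fintype.card {v : (G i).V // v ≠ t i} + 1 = Fintype.card (G i).V :=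
    fun i => card_ne_add_one (t i)
  calc (∑ i, Fintype.card {v : (G i).V // v ≠ t i}) + n
      = ∑ i : Fin n, (Fintype.card {v : (G i).V // v ≠ t i} + 1) := by
        rw [Finset.sum_add_distrib, Finset.sum_const, Finset.card_univ, Fintype.card_fin,
          smul_eq_mul, mul_one]
    _ = ∑ i, Fintype.card (G i).V := Finset.sum_congr rfl (fun i _ => this i)

theorem card_I2 (hst : ∀ i, s i ≠ t i) (i : Fin n) :
    Fintype.card ((G i).ident2 (s i) (t i)).V + 1 = Fintype.card (G i).V := by
  have h1 : Fintype.card ((G i).ident2 (s i) (t i)).V =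
      Fintype.card {v : (G i).V // v ≠ s i} :=
    Fintype.card_congr (tpEquiv (s i) (t i) (hst i))
  rw [h1]
  exact card_ne_add_one (s i)

/-- the edges of `T` lying in the `i`-th piece -/
noncomputable def piece (T : Finset (Σ i, (G i).E)) (i : Fin n) : Finset (G i).E :=
  Finset.univ.filter (fun e => (⟨i, e⟩ : Σ i, (G i).E) ∈ T)

theorem mem_piece {T : Finset (Σ i, (G i).E)} {i : Fin n} {e : (G i).E} :
    e ∈ piece G T i ↔ ⟨i, e⟩ ∈ T := by simp [piece]

theorem sigma_piece (T : Finset (Σ i, (G i).E)) :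
    Finset.univ.sigma (fun i => piece G T i) = T := by
  ext ⟨i, e⟩
  simp [Finset.mem_sigma, mem_piece]

theorem sum_card_piece (T : Finset (Σ i, (G i).E)) :
    ∑ i, (piece G T i).card = T.card := by
  conv_rhs => rw [← sigma_piece G T]
  rw [Finset.card_sigma]

theorem piece_reach_to_CG {T : Finset (Σ i, (G i).E)} {i : Fin n} {u v : (G i).V}
    (h : Relation.ReflTransGen (eadj (G i).ends (piece G T i)) u v) :
    Relation.ReflTransGen (eadj (cycleGlue G s t).ends T)
      (mkc G s t ⟨i, u⟩) (mkc G s t ⟨i, v⟩) := by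
  refine ReflTransGen.lift (fun w => mkc G s t ⟨i, w⟩) ?_ _ _ h
  rintro x y ⟨e, he, hends⟩
  refine ⟨⟨i, e⟩, (mem_piece G).mp he, ?_⟩
  rw [cg_ends]
  rcases hends with h' | h'
  · left; rw [h']
  · right; rw [h']

noncomputable def phi (hn : 2 ≤ n) (i : Fin n) :
    (cycleGlue G s t).V → ((G i).ident2 (s i) (t i)).V :=
  Quot.lift
    (fun x => if h : x.1 = i then mk2 G s t i (h ▸ x.2) else mk2 G s t i (s i))
    (by
      rintro x y ⟨j, rfl, rfl⟩
      dsimp only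
      by_cases hj : j = i
      · subst hj
        rw [dif_pos rfl, dif_neg (finSucc_ne hn j)]
        exact (Quot.sound ⟨rfl, rfl⟩).symm
      · rw [dif_neg hj]
        by_cases hsj : finSucc j = i
        · subst hsj
          rw [dif_pos rfl]
        · rw [dif_neg hsj])

theorem phi_mk_eq (hn : 2 ≤ n) (i : Fin n) (v : (G i).V) :
    phi G s t hn i (mkc G s t ⟨i, v⟩) = mk2 G s t i v := by
  show (if h : i = i then mk2 G s t i (h ▸ v) else mk2 G s t i (s i)) = mk2 G s t i v
  rw [dif_pos rfl]

theorem phi_mk_ne (hn : 2 ≤ n) {i j : Fin n} (hj : j ≠ i) (v : (G j).V) :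
    phi G s t hn i (mkc G s t ⟨j, v⟩) = mk2 G s t i (s i) := by
  show (if h : j = i then mk2 G s t i (h ▸ v) else mk2 G s t i (s i)) = mk2 G s t i (s i)
  rw [dif_neg hj]

theorem reach_CG_to_I2 (hn : 2 ≤ n) (i : Fin n) {T : Finset (Σ i, (G i).E)}
    {X Y : (cycleGlue G s t).V}
    (h : Relation.ReflTransGen (eadj (cycleGlue G s t).ends T) X Y) :
    Relation.ReflTransGen (eadj ((G i).ident2 (s i) (t i)).ends (piece G T i))
      (phi G s t hn i X) (phi G s t hn i Y) := by
  refine ReflTransGen.lift' (phi G s t hn i) ?_ _ _ h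
  rintro X' Y' ⟨⟨j, e⟩, he, hends⟩
  dsimp only [Function.onFun]
  rw [cg_ends] at hends
  by_cases hj : j = i
  · subst hj
    rcases hends with h' | h'
    · have h1 := congrArg Prod.fst h'
      have h2 := congrArg Prod.snd h'
      dsimp only at h1 h2
      subst h1; subst h2
      rw [phi_mk_eq, phi_mk_eq]
      exact ReflTransGen.single ⟨e, (mem_piece G).mpr he, Or.inl rfl⟩
    · have h1 := congrArg Prod.fst h'
      have h2 := congrArg Prod.snd h'
      dsimp only at h1 h2
      subst h1; subst h2
      rw [phi_mk_eq, phi_mk_eq]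
      exact ReflTransGen.single ⟨e, (mem_piece G).mpr he, Or.inr rfl⟩
  · rcases hends with h' | h'
    all_goals {
      have h1 := congrArg Prod.fst h'
      have h2 := congrArg Prod.snd h'
      dsimp only at h1 h2
      subst h1; subst h2
      rw [phi_mk_ne G s t hn hj, phi_mk_ne G s t hn hj] }

theorem piece_spans_I2 (hn : 2 ≤ n) {T : Finset (Σ i, (G i).E)}
    (hT : ∀ X Y : (cycleGlue G s t).V,
      Relation.ReflTransGen (eadj (cycleGlue G s t).ends T) X Y) (i : Fin n) :
    ∀ α β : ((G i).ident2 (s i) (t i)).V,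
      Relation.ReflTransGen (eadj ((G i).ident2 (s i) (t i)).ends (piece G T i)) α β := by
  intro α β
  induction α using Quot.ind with | _ u => ?_
  induction β using Quot.ind with | _ v => ?_
  have h := reach_CG_to_I2 G s t hn i (hT (mkc G s t ⟨i, u⟩) (mkc G s t ⟨i, v⟩))
  rwa [phi_mk_eq, phi_mk_eq] at h

/-- adjacency in a piece, allowing a hop between `s i` and `t i` -/
def hop (i : Fin n) (T : Finset (G i).E) : (G i).V → (G i).V → Prop :=
  fun x y => eadj (G i).ends T x y ∨ ((x = s i ∧ y = t i) ∨ (x = t i ∧ y = s i))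

theorem I2_reach_lift {i : Fin n} {T : Finset (G i).E} {u v : (G i).V}
    (h : Relation.ReflTransGen (eadj ((G i).ident2 (s i) (t i)).ends T)
      (mk2 G s t i u) (mk2 G s t i v)) :
    Relation.ReflTransGen (hop G s t i T) u v := by
  refine reach_lift (r := tpRel (s i) (t i)) ?_ ?_ ?_ h
  · rintro x y (hxy | (⟨rfl, rfl⟩ | ⟨rfl, rfl⟩))
    · exact Or.inl (eadj_symm hxy)
    · exact Or.inr (Or.inr ⟨rfl, rfl⟩)
    · exact Or.inr (Or.inl ⟨rfl, rfl⟩)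
  · rintro x y ⟨rfl, rfl⟩
    exact ReflTransGen.single (Or.inr (Or.inl ⟨rfl, rfl⟩))
  · rintro α β ⟨e, he, hends⟩
    erw [i2_ends] at hends
    rcases hends with h' | h'
    · exact ⟨((G i).ends e).1, ((G i).ends e).2, congrArg Prod.fst h', congrArg Prod.snd h',
        ReflTransGen.single (Or.inl ⟨e, he, Or.inl rfl⟩)⟩
    · exact ⟨((G i).ends e).2, ((G i).ends e).1, congrArg Prod.snd h', congrArg Prod.fst h',
        ReflTransGen.single (Or.inl ⟨e, he, Or.inr rfl⟩)⟩

theorem reach_s_or_t {i : Fin n} {T : Finset (G i).E}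
    (h : ∀ α β : ((G i).ident2 (s i) (t i)).V,
      Relation.ReflTransGen (eadj ((G i).ident2 (s i) (t i)).ends T) α β)
    (v : (G i).V) :
    Relation.ReflTransGen (eadj (G i).ends T) v (s i) ∨
      Relation.ReflTransGen (eadj (G i).ends T) v (t i) := by
  have h2 := I2_reach_lift G s t (h (mk2 G s t i v) (mk2 G s t i (s i)))
  clear h
  induction h2 using ReflTransGen.head_induction_on with
  | refl => exact Or.inl ReflTransGen.refl
  | head hstep _ ih =>
      rcases hstep with hxy | (⟨rfl, rfl⟩ | ⟨rfl, rfl⟩)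
      · rcases ih with ih | ih
        · exact Or.inl (ReflTransGen.head hxy ih)
        · exact Or.inr (ReflTransGen.head hxy ih)
      · exact Or.inl ReflTransGen.refl
      · exact Or.inr ReflTransGen.refl

theorem hop_to_reach {i : Fin n} {T : Finset (G i).E}
    (hst' : Relation.ReflTransGen (eadj (G i).ends T) (s i) (t i)) {u v : (G i).V}
    (h : Relation.ReflTransGen (hop G s t i T) u v) :
    Relation.ReflTransGen (eadj (G i).ends T) u v := by
  induction h with
  | refl => exact ReflTransGen.refl
  | tail _ hstep ih =>
      rcases hstep with hxy | (⟨rfl, rfl⟩ | ⟨rfl, rfl⟩)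
      · exact ih.tail hxy
      · exact ih.trans hst'
      · exact ih.trans (ereach_symm hst')

theorem span_of_span_I2 {i : Fin n} {T : Finset (G i).E}
    (hI : ∀ α β : ((G i).ident2 (s i) (t i)).V,
      Relation.ReflTransGen (eadj ((G i).ident2 (s i) (t i)).ends T) α β)
    (hst' : Relation.ReflTransGen (eadj (G i).ends T) (s i) (t i)) :
    ∀ u v : (G i).V, Relation.ReflTransGen (eadj (G i).ends T) u v :=
  fun u v => hop_to_reach G s t hst' (I2_reach_lift G s t (hI (mk2 G s t i u) (mk2 G s t i v)))

theorem cut_of_ST_I2 (hst : ∀ i, s i ≠ t i) {i : Fin n} {Ti : Finset (G i).E}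
    (h : ((G i).ident2 (s i) (t i)).IsSpanningTree Ti) :
    ¬ Relation.ReflTransGen (eadj (G i).ends Ti) (s i) (t i) := by
  intro hc
  have hspan := span_of_span_I2 G s t h.1 hc
  have hcard := card_le_of_span Ti.card (G i).V (G i).E (G i).ends Ti le_rfl hspan
  have h2 := card_I2 G s t hst i
  haveI : Nonempty ((G i).ident2 (s i) (t i)).V := ⟨mk2 G s t i (s i)⟩
  have h3 : 0 < Fintype.card ((G i).ident2 (s i) (t i)).V := Fintype.card_pos
  have h4 : Ti.card = Fintype.card ((G i).ident2 (s i) (t i)).V - 1 := h.2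
  omega

/-- reachability inside the disjoint union (sigma) graph -/
def sReach (T : Finset (Σ i, (G i).E)) : (Σ i, (G i).V) → (Σ i, (G i).V) → Prop :=
  Relation.ReflTransGen (eadj (sigmaGraph G).ends T)

theorem sg_ends (e : Σ i, (G i).E) :
    (sigmaGraph G).ends e =
      (⟨e.1, ((G e.1).ends e.2).1⟩, ⟨e.1, ((G e.1).ends e.2).2⟩) := rfl

theorem sReach_symm {T : Finset (Σ i, (G i).E)} {x y : Σ i, (G i).V}
    (h : sReach G T x y) : sReach G T y x := ereach_symm h

theorem sreach_of_piece {T : Finset (Σ i, (G i).E)} {i : Fin n} {u v : (G i).V}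
    (h : Relation.ReflTransGen (eadj (G i).ends (piece G T i)) u v) :
    sReach G T ⟨i, u⟩ ⟨i, v⟩ := by
  refine ReflTransGen.lift (fun w => (⟨i, w⟩ : Σ i, (G i).V)) ?_ _ _ h
  rintro x y ⟨e, he, hends⟩
  dsimp only [Function.onFun]
  refine ⟨⟨i, e⟩, (mem_piece G).mp he, ?_⟩
  rw [sg_ends]
  rcases hends with h' | h'
  · left; rw [h']; rfl
  · right; rw [h']; rfl

theorem piece_of_sreach {T : Finset (Σ i, (G i).E)} {i : Fin n} {u v : (G i).V}
    (h : sReach G T ⟨i, u⟩ ⟨i, v⟩) :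
    Relation.ReflTransGen (eadj (G i).ends (piece G T i)) u v := by
  have main : ∀ y, sReach G T ⟨i, u⟩ y → ∀ w, y = ⟨i, w⟩ →
      Relation.ReflTransGen (eadj (G i).ends (piece G T i)) u w := by
    intro y hy
    induction hy with
    | refl =>
        rintro w hw
        obtain ⟨-, hw2⟩ := Sigma.mk.inj_iff.mp hw
        rw [eq_of_heq hw2]
    | tail _ hstep ih =>
        rintro w rfl
        obtain ⟨⟨m, e⟩, he, hends⟩ := hstep
        rw [sg_ends] at hends
        rcases hends with h' | h'
        · have h1 := congrArg Prod.fst h'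
          have h2 := congrArg Prod.snd h'
          dsimp only at h1 h2
          obtain ⟨rfl, hb⟩ := Sigma.mk.inj_iff.mp h2
          have ha := ih _ h1.symm
          exact ha.tail ⟨e, (mem_piece G).mpr he, Or.inl (by rw [← eq_of_heq hb])⟩
        · have h1 := congrArg Prod.fst h'
          have h2 := congrArg Prod.snd h'
          dsimp only at h1 h2
          obtain ⟨rfl, hb⟩ := Sigma.mk.inj_iff.mp h1
          have ha := ih _ h2.symm
          exact ha.tail ⟨e, (mem_piece G).mpr he, Or.inr (by rw [← eq_of_heq hb])⟩
  exact main _ h _ rfl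

theorem dz {j m : Fin n} : ((m.1 + n - j.1) % n = 0) ↔ m = j := by
  rw [mod_d_eq_zero_iff j.2 m.2]
  exact ⟨fun h => Fin.ext h, fun h => by rw [h]⟩

theorem dinj {j m m' : Fin n}
    (h : (m.1 + n - j.1) % n = (m'.1 + n - j.1) % n) : m = m' :=
  Fin.ext (mod_d_inj j.2 m.2 m'.2 h)

theorem dsucc (j m : Fin n) :
    ((finSucc m).1 + n - j.1) % n = ((m.1 + n - j.1) % n + 1) % n :=
  mod_d_succ j.2 m.2

theorem succ_mod_resolve {N a : ℕ} (ha : a < N) :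
    (a + 1) % N = if a + 1 = N then 0 else a + 1 := by
  split_ifs with h
  · rw [h, Nat.mod_self]
  · exact Nat.mod_eq_of_lt (by omega)

/-- the 2-colouring of the vertices used to show at most one piece is cut -/
noncomputable def gfun (T : Finset (Σ i, (G i).E)) (j i₀ : Fin n) : (Σ i, (G i).V) → Prop :=
  fun x =>
    if x.1 = j then sReach G T x ⟨j, t j⟩
    else if x.1 = i₀ then sReach G T x ⟨i₀, s i₀⟩
    else ((x.1.1 + n - j.1) % n < (i₀.1 + n - j.1) % n)

theorem gfun_edge (T : Finset (Σ i, (G i).E)) (j i₀ : Fin n) {x y : Σ i, (G i).V}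
    (hxy : eadj (sigmaGraph G).ends T x y) (hfst : x.1 = y.1) :
    gfun G s t T j i₀ x = gfun G s t T j i₀ y := by
  have key : ∀ z, sReach G T x z ↔ sReach G T y z :=
    fun z => ⟨fun h => ReflTransGen.head (eadj_symm hxy) h, fun h => ReflTransGen.head hxy h⟩
  dsimp only [gfun]
  rw [hfst]
  by_cases h1 : y.1 = j
  · rw [if_pos h1, if_pos h1]
    exact propext (key _)
  · rw [if_neg h1, if_neg h1]
    by_cases h2 : y.1 = i₀
    · rw [if_pos h2, if_pos h2]
      exact propext (key _)
    · rw [if_neg h2, if_neg h2]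

theorem gfun_respects (hn : 2 ≤ n) (T : Finset (Σ i, (G i).E)) (j i₀ : Fin n)
    (hij : j ≠ i₀)
    (hcut : ¬ sReach G T ⟨i₀, s i₀⟩ ⟨i₀, t i₀⟩)
    (hcutj : ¬ sReach G T ⟨j, s j⟩ ⟨j, t j⟩) :
    ∀ x y, cgRel G s t x y → gfun G s t T j i₀ x = gfun G s t T j i₀ y := by
  have hcut' : ¬ sReach G T ⟨i₀, t i₀⟩ ⟨i₀, s i₀⟩ := fun h => hcut (sReach_symm G h)
  rintro x y ⟨m, rfl, rfl⟩
  dsimp only [gfun]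
  by_cases hmj : m = j
  · subst hmj
    rw [if_pos rfl, if_neg (finSucc_ne hn m)]
    by_cases hsi : finSucc m = i₀
    · rw [if_pos hsi]
      have hpair : (⟨finSucc m, s (finSucc m)⟩ : Σ i, (G i).V) = ⟨i₀, s i₀⟩ := by rw [hsi]
      rw [hpair]
      exact propext (iff_of_true ReflTransGen.refl ReflTransGen.refl)
    · rw [if_neg hsi]
      have h1 : ((finSucc m).1 + n - m.1) % n = 1 := by
        rw [dsucc]
        have e1 : m.1 + n - m.1 = n := by omega
        rw [e1, Nat.mod_self]
        exact Nat.mod_eq_of_lt (by omega)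
      have hc0 : (i₀.1 + n - m.1) % n ≠ 0 := fun h => hij (dz.mp h).symm
      have hc1 : (i₀.1 + n - m.1) % n ≠ 1 := by
        intro h
        exact hsi (dinj (h1.trans h.symm))
      exact propext (iff_of_true ReflTransGen.refl (by omega))
  · rw [if_neg hmj]
    by_cases hmi : m = i₀
    · subst hmi
      rw [if_pos rfl]
      by_cases hfj : finSucc m = j
      · rw [if_pos hfj]
        have hpair : (⟨finSucc m, s (finSucc m)⟩ : Σ i, (G i).V) = ⟨j, s j⟩ := by rw [hfj]
        rw [hpair]
        exact propext (iff_of_false hcut' hcutj)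
      · rw [if_neg hfj, if_neg (finSucc_ne hn m)]
        have h1 := dsucc j m
        have h2 : ((finSucc m).1 + n - j.1) % n ≠ 0 := fun h => hfj (dz.mp h)
        have hmlt := mod_d_lt (n := n) (j := j.1) (m := m.1) j.2 m.2
        rw [succ_mod_resolve hmlt] at h1
        refine propext (iff_of_false hcut' ?_)
        split_ifs at h1 <;> omega
    · rw [if_neg hmi]
      have hmlt := mod_d_lt (n := n) (j := j.1) (m := m.1) j.2 m.2
      have hm0 : (m.1 + n - j.1) % n ≠ 0 := fun h => hmj (dz.mp h)
      have hmc : (m.1 + n - j.1) % n ≠ (i₀.1 + n - j.1) % n := fun h => hmi (dinj h)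
      have h1 := dsucc j m
      rw [succ_mod_resolve hmlt] at h1
      by_cases hfj : finSucc m = j
      · rw [if_pos hfj]
        have hpair : (⟨finSucc m, s (finSucc m)⟩ : Σ i, (G i).V) = ⟨j, s j⟩ := by rw [hfj]
        rw [hpair]
        have h2 : ((finSucc m).1 + n - j.1) % n = 0 := dz.mpr hfj
        have hilt := mod_d_lt (n := n) (j := j.1) (m := i₀.1) j.2 i₀.2
        refine propext (iff_of_false ?_ hcutj)
        split_ifs at h1 <;> omega
      · rw [if_neg hfj]
        have h2 : ((finSucc m).1 + n - j.1) % n ≠ 0 := fun h => hfj (dz.mp h)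
        by_cases hfi : finSucc m = i₀
        · rw [if_pos hfi]
          have hpair : (⟨finSucc m, s (finSucc m)⟩ : Σ i, (G i).V) = ⟨i₀, s i₀⟩ := by
            rw [hfi]
          rw [hpair]
          have h3 : ((finSucc m).1 + n - j.1) % n = (i₀.1 + n - j.1) % n := by rw [hfi]
          have hc0 : (i₀.1 + n - j.1) % n ≠ 0 := fun h => hij (dz.mp h).symm
          refine propext (iff_of_true ?_ ReflTransGen.refl)
          split_ifs at h1 <;> omega
        · rw [if_neg hfi]
          have h3 : ((finSucc m).1 + n - j.1) % n ≠ (i₀.1 + n - j.1) % n :=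
            fun h => hfi (dinj h)
          rw [eq_iff_iff]
          split_ifs at h1 <;> omega

theorem claimA (hn : 2 ≤ n) {T : Finset (Σ i, (G i).E)}
    (hspan : ∀ X Y : (cycleGlue G s t).V,
      Relation.ReflTransGen (eadj (cycleGlue G s t).ends T) X Y)
    {i₀ j : Fin n} (hij : j ≠ i₀)
    (hcut : ¬ sReach G T ⟨i₀, s i₀⟩ ⟨i₀, t i₀⟩) :
    sReach G T ⟨j, s j⟩ ⟨j, t j⟩ := by
  by_contra hcutj
  set ψ : (cycleGlue G s t).V → Prop :=
    Quot.lift (gfun G s t T j i₀) (gfun_respects G s t hn T j i₀ hij hcut hcutj) with hψ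
  have hψmk : ∀ x : Σ i, (G i).V, ψ (mkc G s t x) = gfun G s t T j i₀ x := fun _ => rfl
  have hψstep : ∀ X Y, eadj (cycleGlue G s t).ends T X Y → ψ X = ψ Y := by
    rintro X Y ⟨⟨m, e⟩, he, hends⟩
    rw [cg_ends] at hends
    have hadj : eadj (sigmaGraph G).ends T
        (⟨m, ((G m).ends e).1⟩ : Σ i, (G i).V) ⟨m, ((G m).ends e).2⟩ :=
      ⟨⟨m, e⟩, he, Or.inl rfl⟩
    rcases hends with h' | h'
    · have h1 := congrArg Prod.fst h'
      have h2 := congrArg Prod.snd h'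
      dsimp only at h1 h2
      subst h1; subst h2
      rw [hψmk, hψmk]
      exact gfun_edge G s t T j i₀ hadj rfl
    · have h1 := congrArg Prod.fst h'
      have h2 := congrArg Prod.snd h'
      dsimp only at h1 h2
      subst h1; subst h2
      rw [hψmk, hψmk]
      exact (gfun_edge G s t T j i₀ hadj rfl).symm
  have hgen : ∀ Y, Relation.ReflTransGen (eadj (cycleGlue G s t).ends T)
      (mkc G s t ⟨j, s j⟩) Y → ψ (mkc G s t ⟨j, s j⟩) = ψ Y := by
    intro Y hw
    induction hw with
    | refl => rfl
    | tail _ h2 ih => exact ih.trans (hψstep _ _ h2)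
  have hconst : ψ (mkc G s t ⟨j, s j⟩) = ψ (mkc G s t ⟨j, t j⟩) :=
    hgen (mkc G s t ⟨j, t j⟩) (hspan _ _)
  rw [hψmk, hψmk] at hconst
  have hL : gfun G s t T j i₀ ⟨j, s j⟩ = sReach G T ⟨j, s j⟩ ⟨j, t j⟩ := by
    dsimp only [gfun]
    rw [if_pos rfl]
  have hR : gfun G s t T j i₀ ⟨j, t j⟩ = sReach G T ⟨j, t j⟩ ⟨j, t j⟩ := by
    dsimp only [gfun]
    rw [if_pos rfl]
  rw [hL, hR] at hconst
  exact hcutj (by rw [hconst]; exact ReflTransGen.refl)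

theorem junction_glue (m : Fin n) :
    mkc G s t ⟨m, t m⟩ = mkc G s t ⟨finSucc m, s (finSucc m)⟩ :=
  Quot.sound ⟨m, rfl, rfl⟩

theorem ite_sum_two_one (i₀ : Fin n) :
    (∑ i : Fin n, (if i = i₀ then 2 else 1)) = n + 1 := by
  have h1 : ∀ i : Fin n, (if i = i₀ then 2 else 1) = 1 + (if i = i₀ then 1 else 0) := by
    intro i; split_ifs <;> rfl
  rw [Finset.sum_congr rfl (fun i _ => h1 i), Finset.sum_add_distrib,
    Finset.sum_const, Finset.card_univ, Fintype.card_fin, smul_eq_mul, mul_one,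
    Finset.sum_ite_eq' Finset.univ i₀ (fun _ => 1), if_pos (Finset.mem_univ i₀)]

open Fin.NatCast in
theorem backward (hn : 2 ≤ n) (hst : ∀ i, s i ≠ t i) (i₀ : Fin n)
    (T : Finset (Σ i, (G i).E))
    (h₀ : ((G i₀).ident2 (s i₀) (t i₀)).IsSpanningTree (piece G T i₀))
    (hjs : ∀ j, j ≠ i₀ → (G j).IsSpanningTree (piece G T j)) :
    (cycleGlue G s t).IsSpanningTree T := by
  haveI : NeZero n := ⟨by omega⟩
  constructor
  · -- connectivity
    have hj_step : ∀ m : Fin n, m ≠ i₀ →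
        Relation.ReflTransGen (eadj (cycleGlue G s t).ends T)
          (mkc G s t ⟨m, s m⟩) (mkc G s t ⟨finSucc m, s (finSucc m)⟩) := by
      intro m hm
      have h1 : Relation.ReflTransGen (eadj (G m).ends (piece G T m)) (s m) (t m) :=
        (hjs m hm).1 (s m) (t m)
      have h2 := piece_reach_to_CG G s t (T := T) (i := m) h1
      rw [junction_glue] at h2
      exact h2
    have hsucc_add : ∀ m : Fin n, finSucc m = m + 1 := by
      intro m
      apply Fin.ext
      show (m.1 + 1) % n = (m + 1 : Fin n).1
      rw [Fin.add_def, Fin.val_one' n]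
      rw [Nat.mod_eq_of_lt (show 1 < n by omega)]
    have hchain : ∀ k : ℕ, k ≤ n - 1 →
        Relation.ReflTransGen (eadj (cycleGlue G s t).ends T)
          (mkc G s t ⟨finSucc i₀, s (finSucc i₀)⟩)
          (mkc G s t ⟨finSucc i₀ + (k : Fin n), s (finSucc i₀ + (k : Fin n))⟩) := by
      intro k
      induction k with
      | zero => intro _; rw [Nat.cast_zero, add_zero]
      | succ k ih =>
          intro hk
          have ih' := ih (by omega)
          have hm : finSucc i₀ + (k : Fin n) ≠ i₀ := by
            intro hcontra
            rw [hsucc_add i₀, add_assoc] at hcontra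
            have h0 : ((1 : Fin n) + (k : Fin n)) = 0 :=
              add_left_cancel (hcontra.trans (add_zero i₀).symm)
            have hval : (1 % n + k % n) % n = 0 := congrArg Fin.val h0
            have hkn : k < n := by omega
            rw [Nat.mod_eq_of_lt (show 1 < n by omega), Nat.mod_eq_of_lt hkn,
              Nat.mod_eq_of_lt (show 1 + k < n by omega)] at hval
            omega
          have hstep := hj_step _ hm
          rw [hsucc_add (finSucc i₀ + (k : Fin n))] at hstep
          have hcast : (finSucc i₀ + (k : Fin n)) + 1 = finSucc i₀ + ((k + 1 : ℕ) : Fin n) := by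
            rw [Nat.cast_add, Nat.cast_one, add_assoc]
          rw [hcast] at hstep
          exact ih'.trans hstep
    have hJall : ∀ m : Fin n,
        Relation.ReflTransGen (eadj (cycleGlue G s t).ends T)
          (mkc G s t ⟨finSucc i₀, s (finSucc i₀)⟩) (mkc G s t ⟨m, s m⟩) := by
      intro m
      have hk : finSucc i₀ + ((m - finSucc i₀ : Fin n).1 : Fin n) = m := by
        rw [Fin.cast_val_eq_self, add_comm, sub_add_cancel]
      have h2 := hchain (m - finSucc i₀ : Fin n).1 (by have := (m - finSucc i₀ : Fin n).2; omega)
      rw [hk] at h2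
      exact h2
    have hvert : ∀ (m : Fin n) (v : (G m).V), ∃ m',
        Relation.ReflTransGen (eadj (cycleGlue G s t).ends T)
          (mkc G s t ⟨m, v⟩) (mkc G s t ⟨m', s m'⟩) := by
      intro m v
      by_cases hm : m = i₀
      · subst hm
        rcases reach_s_or_t G s t (h₀.1) v with h | h
        · exact ⟨m, piece_reach_to_CG G s t h⟩
        · refine ⟨finSucc m, ?_⟩
          have h2 := piece_reach_to_CG G s t (T := T) (i := m) h
          rw [junction_glue] at h2
          exact h2
      · exact ⟨m, piece_reach_to_CG G s t ((hjs m hm).1 v (s m))⟩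
    intro X Y
    induction X using Quot.ind with | _ x => ?_
    induction Y using Quot.ind with | _ y => ?_
    obtain ⟨m₁, v₁⟩ := x
    obtain ⟨m₂, v₂⟩ := y
    obtain ⟨m₁', hX⟩ := hvert m₁ v₁
    obtain ⟨m₂', hY⟩ := hvert m₂ v₂
    exact (hX.trans ((ereach_symm (hJall m₁')).trans (hJall m₂'))).trans (ereach_symm hY)
  · -- cardinality
    have hcards := sum_card_piece G T
    have hCG := card_CG G s t hst
    have hI2 := card_I2 G s t hst i₀
    haveI : Nonempty ((G i₀).ident2 (s i₀) (t i₀)).V := ⟨mk2 G s t i₀ (s i₀)⟩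
    have hposI : 0 < Fintype.card ((G i₀).ident2 (s i₀) (t i₀)).V := Fintype.card_pos
    have hpt : ∀ i : Fin n, (piece G T i).card + (if i = i₀ then 2 else 1) =
        Fintype.card (G i).V := by
      intro i
      split_ifs with h
      · subst h
        have h2 : (piece G T i).card = Fintype.card ((G i).ident2 (s i) (t i)).V - 1 := h₀.2
        omega
      · have h2 := (hjs i h).2
        haveI : Nonempty (G i).V := ⟨s i⟩
        have hpos : 0 < Fintype.card (G i).V := Fintype.card_pos
        omega
    have hsum : ∑ i, ((piece G T i).card + (if i = i₀ then 2 else 1)) =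
        ∑ i, Fintype.card (G i).V := Finset.sum_congr rfl (fun i _ => hpt i)
    rw [Finset.sum_add_distrib, sum_card_piece, ite_sum_two_one] at hsum
    haveI : Nonempty (cycleGlue G s t).V := ⟨mkc G s t ⟨i₀, s i₀⟩⟩
    have hposCG : 0 < Fintype.card (cycleGlue G s t).V := Fintype.card_pos
    show T.card = Fintype.card (cycleGlue G s t).V - 1
    omega

theorem forward (hn : 2 ≤ n) (hst : ∀ i, s i ≠ t i) {T : Finset (Σ i, (G i).E)}
    (hT : (cycleGlue G s t).IsSpanningTree T) :
    ∃ i₀, (¬ sReach G T ⟨i₀, s i₀⟩ ⟨i₀, t i₀⟩) ∧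
      ((G i₀).ident2 (s i₀) (t i₀)).IsSpanningTree (piece G T i₀) ∧
      ∀ j, j ≠ i₀ → (G j).IsSpanningTree (piece G T j) := by
  have hspan : ∀ X Y : (cycleGlue G s t).V,
      Relation.ReflTransGen (eadj (cycleGlue G s t).ends T) X Y := hT.1
  have hid := piece_spans_I2 G s t hn hspan
  have hCG := card_CG G s t hst
  haveI : Nonempty (cycleGlue G s t).V := ⟨mkc G s t ⟨⟨0, by omega⟩, s _⟩⟩
  have hposCG : 0 < Fintype.card (cycleGlue G s t).V := Fintype.card_pos
  have hT2 : T.card = Fintype.card (cycleGlue G s t).V - 1 := hT.2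
  have hcards := sum_card_piece G T
  have hex : ∃ i₀, ¬ sReach G T ⟨i₀, s i₀⟩ ⟨i₀, t i₀⟩ := by
    by_contra hno
    push_neg at hno
    have hsp : ∀ i, ∀ u v : (G i).V,
        Relation.ReflTransGen (eadj (G i).ends (piece G T i)) u v := fun i =>
      span_of_span_I2 G s t (hid i) (piece_of_sreach G (hno i))
    have hb : ∀ i, Fintype.card (G i).V ≤ (piece G T i).card + 1 := fun i =>
      card_le_of_span _ _ _ _ _ le_rfl (hsp i)
    have hsum : ∑ i, Fintype.card (G i).V ≤ ∑ i, ((piece G T i).card + 1) :=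
      Finset.sum_le_sum (fun i _ => hb i)
    rw [Finset.sum_add_distrib, sum_card_piece, Finset.sum_const, Finset.card_univ,
      Fintype.card_fin, smul_eq_mul, mul_one] at hsum
    omega
  obtain ⟨i₀, hcut⟩ := hex
  have hstj : ∀ j, j ≠ i₀ →
      Relation.ReflTransGen (eadj (G j).ends (piece G T j)) (s j) (t j) :=
    fun j hj => piece_of_sreach G (claimA G s t hn hspan hj hcut)
  have hspj : ∀ j, j ≠ i₀ → ∀ u v : (G j).V,
      Relation.ReflTransGen (eadj (G j).ends (piece G T j)) u v :=
    fun j hj => span_of_span_I2 G s t (hid j) (hstj j hj)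
  have hub : ∀ i, Fintype.card (G i).V ≤ (piece G T i).card + (if i = i₀ then 2 else 1) := by
    intro i
    split_ifs with h
    · subst h
      have hbI : Fintype.card ((G i).ident2 (s i) (t i)).V ≤ (piece G T i).card + 1 :=
        card_le_of_span _ _ _ _ _ le_rfl (hid i)
      have h2 := card_I2 G s t hst i
      omega
    · have := card_le_of_span _ _ _ _ _ le_rfl (hspj i h)
      omega
  have hsum2 : ∑ i, ((piece G T i).card + (if i = i₀ then 2 else 1)) =
      ∑ i, Fintype.card (G i).V := by
    rw [Finset.sum_add_distrib, sum_card_piece, ite_sum_two_one]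
    omega
  have heq : ∀ i, Fintype.card (G i).V =
      (piece G T i).card + (if i = i₀ then 2 else 1) := by
    by_contra hne
    push_neg at hne
    obtain ⟨i, hi⟩ := hne
    have hlt := Finset.sum_lt_sum (fun i (_ : i ∈ Finset.univ) => hub i)
      ⟨i, Finset.mem_univ i, lt_of_le_of_ne (hub i) hi⟩
    omega
  refine ⟨i₀, hcut, ⟨hid i₀, ?_⟩, fun j hj => ⟨hspj j hj, ?_⟩⟩
  · have h1 := heq i₀
    rw [if_pos rfl] at h1
    have h2 := card_I2 G s t hst i₀
    show (piece G T i₀).card = Fintype.card ((G i₀).ident2 (s i₀) (t i₀)).V - 1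
    omega
  · have h1 := heq j
    rw [if_neg hj] at h1
    omega

theorem piece_sigma (f : ∀ j, Finset (G j).E) (j : Fin n) :
    piece G (Finset.univ.sigma f) j = f j := by
  ext e
  simp [mem_piece, Finset.mem_sigma]

theorem count (hn : 2 ≤ n) (hst : ∀ i, s i ≠ t i) :
    (cycleGlue G s t).t =
      ∑ i, ((G i).ident2 (s i) (t i)).t * ∏ j ∈ Finset.univ.erase i, (G j).t := by
  classical
  let Fam := Σ i₀ : Fin n, ∀ j : Fin n, {Tj : Finset (G j).E //
    if j = i₀ then ((G j).ident2 (s j) (t j)).IsSpanningTree Tj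
    else (G j).IsSpanningTree Tj}
  let F : Fam → {T : Finset (Σ i, (G i).E) // (cycleGlue G s t).IsSpanningTree T} :=
    fun x => ⟨Finset.univ.sigma (fun j => (x.2 j).1), by
      refine backward G s t hn hst x.1 _ ?_ ?_
      · rw [piece_sigma]
        have h2 := (x.2 x.1).2
        rw [if_pos rfl] at h2
        exact h2
      · intro j hj
        rw [piece_sigma]
        have h2 := (x.2 j).2
        rw [if_neg hj] at h2
        exact h2⟩
  have hbij : Function.Bijective F := by
    constructor
    · rintro ⟨i₁, f₁⟩ ⟨i₂, f₂⟩ hab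
      have hT : Finset.univ.sigma (fun j => (f₁ j).1) =
          Finset.univ.sigma (fun j => (f₂ j).1) := congrArg Subtype.val hab
      have hcomp : ∀ j, (f₁ j).1 = (f₂ j).1 := by
        intro j
        rw [← piece_sigma G (fun j => (f₁ j).1) j, ← piece_sigma G (fun j => (f₂ j).1) j, hT]
      have hii : i₁ = i₂ := by
        by_contra hne
        have h1 := (f₁ i₁).2
        rw [if_pos rfl] at h1
        have h2 := (f₂ i₁).2
        rw [if_neg hne] at h2
        rw [← hcomp i₁] at h2
        exact cut_of_ST_I2 G s t hst h1 (h2.1 (s i₁) (t i₁))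
      subst hii
      have : f₁ = f₂ := funext (fun j => Subtype.ext (hcomp j))
      rw [this]
    · rintro ⟨T, hT⟩
      obtain ⟨i₀, hcut, h₀, hjs⟩ := forward G s t hn hst hT
      refine ⟨⟨i₀, fun j => ⟨piece G T j, ?_⟩⟩, ?_⟩
      · split_ifs with h
        · subst h; exact h₀
        · exact hjs j h
      · apply Subtype.ext
        exact sigma_piece G T
  have hcard : (cycleGlue G s t).t = Nat.card Fam := by
    rw [WMG.t]
    exact (Nat.card_eq_of_bijective F hbij).symm
  rw [hcard, Nat.card_eq_fintype_card, Fintype.card_sigma]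
  apply Finset.sum_congr rfl
  intro i₀ _
  rw [Fintype.card_pi]
  have hterm : ∀ j : Fin n, Fintype.card {Tj : Finset (G j).E //
      if j = i₀ then ((G j).ident2 (s j) (t j)).IsSpanningTree Tj
      else (G j).IsSpanningTree Tj} =
      (if j = i₀ then ((G j).ident2 (s j) (t j)).t else (G j).t) := by
    intro j
    split_ifs with h
    · rw [WMG.t, Nat.card_eq_fintype_card]
      exact Fintype.card_congr (Equiv.subtypeEquivRight (fun T => by rw [if_pos h]))
    · rw [WMG.t, Nat.card_eq_fintype_card]
  rw [Finset.prod_congr rfl (fun j _ => hterm j)]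
  rw [← Finset.mul_prod_erase Finset.univ _ (Finset.mem_univ i₀), if_pos rfl]
  congr 1
  refine Finset.prod_congr rfl ?_
  intro j hj
  rw [if_neg (Finset.ne_of_mem_erase hj)]

end Main

/-- Let `CG_n` be obtained from the cycle `C_n` by replacing its `i`-th edge by
a connected multigraph `G_i`, whose distinguished vertices `s_i, t_i` are
identified with the endpoints of that edge.  Then
`t(CG_n) = (∏_i t(G_i)) ∑_i t(G_{i,s_i t_i})/t(G_i)`.  In particular, if each
`G_i` is a copy of the same graph `G₀` with fixed vertices `s, t`, then
`t(CG_n) = n ⬝ t(G₀)^{n-1} ⬝ t(G₀,_{st})`. -/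
theorem spanning_trees_of_cycle_composition :
    (∀ (n : ℕ), 2 ≤ n → ∀ (G : Fin n → WMG) (s t : ∀ i, (G i).V),
      (∀ i, (G i).Connected) → (∀ i, s i ≠ t i) →
      ((WMG.cycleGlue G s t).t : ℝ) =
        (∏ i, ((G i).t : ℝ)) *
          ∑ i, (((G i).ident2 (s i) (t i)).t : ℝ) / ((G i).t : ℝ)) ∧
    (∀ (n : ℕ), 2 ≤ n → ∀ (G₀ : WMG) (s₀ t₀ : G₀.V),
      G₀.Connected → s₀ ≠ t₀ →
      (WMG.cycleGlue (fun _ : Fin n => G₀) (fun _ => s₀) (fun _ => t₀)).t =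
        n * G₀.t ^ (n - 1) * (G₀.ident2 s₀ t₀).t) := by
  constructor
  · intro n hn G s t hconn hst
    have hcount := count G s t hn hst
    rw [hcount]
    push_cast
    rw [Finset.mul_sum]
    apply Finset.sum_congr rfl
    intro i _
    have hne : ((G i).t : ℝ) ≠ 0 := by
      have := WMG.t_pos (G i) (hconn i)
      exact Nat.cast_ne_zero.mpr (by omega)
    rw [← Finset.mul_prod_erase Finset.univ (fun j => ((G j).t : ℝ)) (Finset.mem_univ i)]
    field_simp
  · intro n hn G₀ s₀ t₀ hconn hst
    have hcount := count (fun _ : Fin n => G₀) (fun _ => s₀) (fun _ => t₀) hn (fun _ => hst)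
    rw [hcount]
    have hprod : ∀ i : Fin n, (∏ _j ∈ Finset.univ.erase i, G₀.t) = G₀.t ^ (n - 1) := by
      intro i
      rw [Finset.prod_const, Finset.card_erase_of_mem (Finset.mem_univ i),
        Finset.card_univ, Fintype.card_fin]
    rw [Finset.sum_congr rfl (fun i _ => by rw [hprod i])]
    rw [Finset.sum_const, Finset.card_univ, Fintype.card_fin, smul_eq_mul]
    ring

end SpanningAux
end

section
/- Let G be a finite connected multigraph, let u be a vertex of G that is not a cut vertex, let N_G(u) = {p₁, …, p_n} with n ≥ 2 be the set of vertices adjacent to u, and suppose u is joined to p_i by a_i ≥ 1 parallel edges for each i. Let H = G − u be the graph obtained by deleting u and all edges incident to u. Then t(G) = (Σ_{i=1}^{n} a_i)·t(H) + Σ_{S ⊆ N_G(u), |S| ≥ 2} ( ∏_{i ∈ I_S} a_i )·t(H_S), where I_S is the set of indices of the vertices in S and H_S is the multigraph obtained from H by identifying all vertices in S into one vertex. -/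
open scoped Classical

namespace WMGAux
variable {V E : Type}

def estep (ends : E → V × V) (T : Finset E) (x y : V) : Prop :=
  ∃ e ∈ T, ends e = (x, y) ∨ ends e = (y, x)

abbrev ereach (ends : E → V × V) (T : Finset E) : V → V → Prop :=
  Relation.ReflTransGen (estep ends T)

lemma estep_symm (ends : E → V × V) (T : Finset E) : Symmetric (estep ends T) := by
  rintro x y ⟨e, he, h | h⟩ <;> exact ⟨e, he, by tauto⟩

lemma ereach_symm (ends : E → V × V) (T : Finset E) : Symmetric (ereach ends T) :=
  fun x y h => (@Relation.ReflTransGen.stdSymm _ _ ⟨estep_symm ends T⟩).symm x y h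

lemma ereach_mono {ends : E → V × V} {T T' : Finset E} (h : T ⊆ T') {x y : V}
    (hr : ereach ends T x y) : ereach ends T' x y := by
  refine Relation.ReflTransGen.mono ?_ _ _ hr
  rintro a b ⟨e, he, hh⟩; exact ⟨e, h he, hh⟩

lemma ereach_insert {ends : E → V × V} {T : Finset E} {e : E} {x y : V}
    (hx : ereach ends (insert e T) x y) :
    ereach ends T x y ∨
    (ereach ends T x (ends e).1 ∧ ereach ends T (ends e).2 y) ∨
    (ereach ends T x (ends e).2 ∧ ereach ends T (ends e).1 y) := by
  induction hx with
  | refl => exact Or.inl Relation.ReflTransGen.refl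
  | tail hab hstep ih =>
    obtain ⟨f, hf, hor⟩ := hstep
    rcases Finset.mem_insert.mp hf with rfl | hfT
    · rcases hor with h1 | h1
      · rcases ih with h | ⟨h1', h2'⟩ | ⟨h1', h2'⟩
        · refine Or.inr (Or.inl ⟨by rw [h1]; exact h, by rw [h1]⟩)
        · exact Or.inr (Or.inl ⟨h1', by rw [h1]⟩)
        · exact Or.inl (by rw [h1] at h1'; exact h1')
      · rcases ih with h | ⟨h1', h2'⟩ | ⟨h1', h2'⟩
        · exact Or.inr (Or.inr ⟨by rw [h1]; exact h, by rw [h1]⟩)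
        · exact Or.inl (by rw [h1] at h1'; exact h1')
        · exact Or.inr (Or.inr ⟨h1', by rw [h1]⟩)
    · -- ordinary step
      have hst : estep ends T _ _ := ⟨f, hfT, hor⟩
      rcases ih with h | ⟨h1', h2'⟩ | ⟨h1', h2'⟩
      · exact Or.inl (h.tail hst)
      · exact Or.inr (Or.inl ⟨h1', h2'.tail hst⟩)
      · exact Or.inr (Or.inr ⟨h1', h2'.tail hst⟩)


lemma exists_reps [Fintype V] (ends : E → V × V) (T : Finset E) :
    ∃ W : Finset V, (∀ v, ∃ w ∈ W, ereach ends T v w) ∧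
      (∀ w₁ ∈ W, ∀ w₂ ∈ W, ereach ends T w₁ w₂ → w₁ = w₂) ∧
      Fintype.card V ≤ W.card + T.card := by
  classical
  induction T using Finset.induction_on with
  | empty =>
    refine ⟨Finset.univ, fun v => ⟨v, Finset.mem_univ v, .refl⟩, ?_, by simp⟩
    intro w₁ _ w₂ _ h
    induction h with
    | refl => rfl
    | tail _ hstep ih => obtain ⟨e, he, _⟩ := hstep; exact absurd he (by simp)
  | @insert e T he ih =>
    obtain ⟨W, h1, h2, h3⟩ := ih
    obtain ⟨w₁, hw₁, hr₁⟩ := h1 (ends e).1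
    obtain ⟨w₂, hw₂, hr₂⟩ := h1 (ends e).2
    by_cases hww : w₁ = w₂
    · subst hww
      refine ⟨W, fun v => ?_, fun x hx y hy hr => ?_, ?_⟩
      · obtain ⟨w, hw, hwr⟩ := h1 v
        exact ⟨w, hw, ereach_mono (Finset.subset_insert _ _) hwr⟩
      · rcases ereach_insert hr with h | ⟨ha, hb⟩ | ⟨ha, hb⟩
        · exact h2 x hx y hy h
        · -- x reach e.1, e.2 reach y ; e.1 reach w₁, e.2 reach w₁
          have : x = w₁ := h2 x hx w₁ hw₁ (ha.trans hr₁)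
          have hy2 : y = w₁ := h2 y hy w₁ hw₂ ((ereach_symm _ _ hb).trans hr₂)
          rw [this, hy2]
        · have : x = w₁ := h2 x hx w₁ hw₂ (ha.trans hr₂)
          have hy2 : y = w₁ := h2 y hy w₁ hw₁ ((ereach_symm _ _ hb).trans hr₁)
          rw [this, hy2]
      · rw [Finset.card_insert_of_notMem he]; omega
    · refine ⟨W.erase w₂, fun v => ?_, fun x hx y hy hr => ?_, ?_⟩
      · obtain ⟨w, hw, hwr⟩ := h1 v
        by_cases hw2 : w = w₂
        · subst hw2
          refine ⟨w₁, Finset.mem_erase.mpr ⟨hww, hw₁⟩, ?_⟩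
          have s1 : ereach ends (insert e T) v w := ereach_mono (Finset.subset_insert _ _) hwr
          have s2 : ereach ends (insert e T) w (ends e).2 :=
            ereach_mono (Finset.subset_insert _ _) (ereach_symm _ _ hr₂)
          have s3 : estep ends (insert e T) (ends e).2 (ends e).1 :=
            ⟨e, Finset.mem_insert_self _ _, by right; rfl⟩
          have s4 : ereach ends (insert e T) (ends e).1 w₁ :=
            ereach_mono (Finset.subset_insert _ _) hr₁
          exact ((s1.trans s2).tail s3).trans s4
        · exact ⟨w, Finset.mem_erase.mpr ⟨hw2, hw⟩,
            ereach_mono (Finset.subset_insert _ _) hwr⟩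
      · have hx' := (Finset.mem_erase.mp hx).2
        have hy' := (Finset.mem_erase.mp hy).2
        rcases ereach_insert hr with h | ⟨ha, hb⟩ | ⟨ha, hb⟩
        · exact h2 x hx' y hy' h
        · exact absurd (h2 y hy' w₂ hw₂ ((ereach_symm _ _ hb).trans hr₂))
            (Finset.mem_erase.mp hy).1
        · exact absurd (h2 x hx' w₂ hw₂ (ha.trans hr₂)) (Finset.mem_erase.mp hx).1
      · rw [Finset.card_insert_of_notMem he, Finset.card_erase_of_mem hw₂]
        have : 1 ≤ W.card := Finset.card_pos.mpr ⟨w₂, hw₂⟩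
        omega

lemma card_le_of_connects [Fintype V] (ends : E → V × V) (T : Finset E)
    (h : ∀ u v : V, ereach ends T u v) : Fintype.card V ≤ T.card + 1 := by
  obtain ⟨W, h1, h2, h3⟩ := exists_reps ends T
  have hW : W.card ≤ 1 := by
    rcases Finset.eq_empty_or_nonempty W with rfl | ⟨w, hw⟩
    · simp
    · have : W ⊆ {w} := fun x hx => Finset.mem_singleton.mpr (h2 x hx w hw (h x w))
      calc W.card ≤ ({w} : Finset V).card := Finset.card_le_card this
        _ = 1 := Finset.card_singleton w
  omega

lemma eqvGen_set {r : V → V → Prop} {A : Set V} (hr : ∀ x y, r x y ↔ x ∈ A ∧ y ∈ A)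
    {x y : V} : Relation.EqvGen r x y ↔ x = y ∨ (x ∈ A ∧ y ∈ A) := by
  constructor
  · intro h
    induction h with
    | rel a b hab => exact Or.inr ((hr a b).mp hab)
    | refl => exact Or.inl rfl
    | symm a b _ ih => tauto
    | trans a b c _ _ ih1 ih2 =>
      rcases ih1 with rfl | ⟨h1, h2⟩
      · exact ih2
      · rcases ih2 with rfl | ⟨h3, h4⟩ <;> tauto
  · rintro (rfl | ⟨h1, h2⟩)
    · exact Relation.EqvGen.refl x
    · exact Relation.EqvGen.rel _ _ ((hr x y).mpr ⟨h1, h2⟩)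

lemma quot_mk_eq_iff {r : V → V → Prop} {A : Set V} (hr : ∀ x y, r x y ↔ x ∈ A ∧ y ∈ A)
    {x y : V} : Quot.mk r x = Quot.mk r y ↔ x = y ∨ (x ∈ A ∧ y ∈ A) := by
  rw [Quot.eq]; exact eqvGen_set hr

noncomputable def quotEquiv {r : V → V → Prop} {A : Set V}
    (hr : ∀ x y, r x y ↔ x ∈ A ∧ y ∈ A) (a₀ : V) (h₀ : a₀ ∈ A) :
    Quot r ≃ {v : V // v ∉ A ∨ v = a₀} where
  toFun := Quot.lift (fun v => if h : v ∈ A then ⟨a₀, Or.inr rfl⟩ else ⟨v, Or.inl h⟩)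
    (by intro x y hxy
        obtain ⟨hx, hy⟩ := (hr x y).mp hxy
        simp [hx, hy])
  invFun v := Quot.mk r v.1
  left_inv := by
    refine Quot.ind (fun v => ?_)
    by_cases h : v ∈ A
    · simp only [h, dif_pos]
      exact Quot.sound ((hr a₀ v).mpr ⟨h₀, h⟩)
    · simp only [h, dif_neg, not_false_iff]
  right_inv := by
    rintro ⟨v, hv | rfl⟩
    · simp [hv]
    · simp [h₀]

lemma card_quot [Fintype V] {r : V → V → Prop} {A : Set V}
    (hr : ∀ x y, r x y ↔ x ∈ A ∧ y ∈ A) (a₀ : V) (h₀ : a₀ ∈ A) [Fintype (Quot r)] :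
    Fintype.card (Quot r) + A.toFinset.card = Fintype.card V + 1 := by
  rw [Fintype.card_congr (quotEquiv hr a₀ h₀)]
  rw [Fintype.card_subtype]
  have hsplit : Finset.univ.filter (fun v : V => v ∉ A ∨ v = a₀)
      = insert a₀ (Finset.univ.filter (fun v : V => v ∉ A)) := by
    ext v; by_cases hv : v = a₀ <;> simp [hv]
  rw [hsplit, Finset.card_insert_of_notMem (by simp [h₀])]
  have := Finset.card_filter_add_card_filter_not
    (s := (Finset.univ : Finset V)) (p := fun v => v ∈ A)
  simp only [Finset.card_univ] at this
  have hA : Finset.univ.filter (fun v : V => v ∈ A) = A.toFinset := by ext v; simp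
  rw [hA] at this
  omega

-- trivial quotient
lemma quot_mk_injective {r : V → V → Prop} (h : ∀ x y, r x y → x = y) :
    Function.Injective (Quot.mk r) := by
  intro x y hxy
  rw [Quot.eq] at hxy
  induction hxy with
  | rel a b hab => exact h a b hab
  | refl => rfl
  | symm a b _ ih => exact ih.symm
  | trans a b c _ _ ih1 ih2 => exact ih1.trans ih2


end WMGAux
section TrivQuot
open WMGAux

lemma WMG.isSpanningTree_quot_trivial (H : WMG) (r : H.V → H.V → Prop)
    (h : ∀ x y, r x y → x = y) (T : Finset H.E) :
    (H.quot r).IsSpanningTree T ↔ H.IsSpanningTree T := by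
  have hinj : Function.Injective (Quot.mk r) := quot_mk_injective h
  have hbij : Function.Bijective (Quot.mk r) := ⟨hinj, Quot.exists_rep⟩
  letI : Fintype (Quot r) := (H.quot r).instV
  have hcard : @Fintype.card (H.quot r).V (H.quot r).instV = Fintype.card H.V :=
    (Fintype.card_congr (Equiv.ofBijective _ hbij)).symm
  have hge : ∀ e : H.E, (H.quot r).ends e = (Quot.mk r (H.ends e).1, Quot.mk r (H.ends e).2) :=
    fun e => rfl
  constructor
  · rintro ⟨hconn, hcardT⟩
    refine ⟨fun u v => ?_, by rwa [hcard] at hcardT⟩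
    have hq := hconn (Quot.mk r u) (Quot.mk r v)
    let g : (H.quot r).V → H.V := Quot.lift id h
    have hstep : ∀ c d : (H.quot r).V,
        (∃ e ∈ T, (H.quot r).ends e = (c, d) ∨ (H.quot r).ends e = (d, c)) →
        (∃ e ∈ T, H.ends e = (g c, g d) ∨ H.ends e = (g d, g c)) := by
      rintro c d ⟨e, he, hor | hor⟩
      · refine ⟨e, he, Or.inl ?_⟩
        rw [hge] at hor
        exact Prod.ext (congrArg g (congrArg Prod.fst hor))
          (congrArg g (congrArg Prod.snd hor))
      · refine ⟨e, he, Or.inr ?_⟩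
        rw [hge] at hor
        exact Prod.ext (congrArg g (congrArg Prod.fst hor))
          (congrArg g (congrArg Prod.snd hor))
    exact Relation.ReflTransGen.lift (p := fun x y => ∃ e ∈ T, H.ends e = (x, y) ∨ H.ends e = (y, x)) g hstep _ _ hq
  · rintro ⟨hconn, hcardT⟩
    refine ⟨fun u v => ?_, by rwa [hcard]⟩
    obtain ⟨x, rfl⟩ := hbij.2 u
    obtain ⟨y, rfl⟩ := hbij.2 v
    have hstep : ∀ c d : H.V, (∃ e ∈ T, H.ends e = (c, d) ∨ H.ends e = (d, c)) →
        (∃ e ∈ T, (H.quot r).ends e = (Quot.mk r c, Quot.mk r d) ∨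
          (H.quot r).ends e = (Quot.mk r d, Quot.mk r c)) := by
      rintro c d ⟨e, he, hor | hor⟩
      · exact ⟨e, he, Or.inl (by rw [hge, hor])⟩
      · exact ⟨e, he, Or.inr (by rw [hge, hor])⟩
    exact Relation.ReflTransGen.lift (p := fun x y => ∃ e ∈ T, (H.quot r).ends e = (x, y) ∨ (H.quot r).ends e = (y, x)) (Quot.mk r) hstep _ _ (hconn x y)

lemma WMG.t_quot_trivial (H : WMG) (r : H.V → H.V → Prop)
    (h : ∀ x y, r x y → x = y) : (H.quot r).t = H.t :=
  Nat.card_congr (Equiv.subtypeEquivRight fun T => H.isSpanningTree_quot_trivial r h T)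
end TrivQuot
namespace WMGAux
open WMG

variable (H : WMG) {n : ℕ} (p : Fin n → H.V) (a : Fin n → ℕ)

/-- The set of vertices `p i` for `i ∈ S`. -/
def pset (S : Finset (Fin n)) : Set H.V := {v | ∃ i ∈ S, v = p i}

/-- The quotient graph `H_S`. -/
noncomputable def HS (S : Finset (Fin n)) : WMG := H.identSet (pset H p S)

lemma hrS (S : Finset (Fin n)) : ∀ x y : H.V,
    (fun x y => x ∈ pset H p S ∧ y ∈ pset H p S) x y ↔ x ∈ pset H p S ∧ y ∈ pset H p S :=
  fun _ _ => Iff.rfl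

lemma HS_ends (S : Finset (Fin n)) (e : H.E) :
    (HS H p S).ends e =
      (Quot.mk _ (H.ends e).1, Quot.mk _ (H.ends e).2) := rfl

lemma pset_toFinset (hp : Function.Injective p) (S : Finset (Fin n)) :
    (pset H p S).toFinset = S.image p := by
  ext v; rw [Set.mem_toFinset]; simp [pset, eq_comm]

lemma card_HS (hp : Function.Injective p) (S : Finset (Fin n)) (hS : S.Nonempty) :
    @Fintype.card (HS H p S).V (HS H p S).instV + S.card = Fintype.card H.V + 1 := by
  obtain ⟨i₀, hi₀⟩ := hS
  letI : Fintype (Quot fun x y => x ∈ pset H p S ∧ y ∈ pset H p S) := (HS H p S).instV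
  have h := card_quot (V := H.V) (A := pset H p S)
    (r := fun x y => x ∈ pset H p S ∧ y ∈ pset H p S) (fun _ _ => Iff.rfl)
    (p i₀) ⟨i₀, hi₀, rfl⟩
  rw [pset_toFinset H p hp, Finset.card_image_of_injective S hp] at h
  exact h

/-- The spanning-tree-candidate of the cone built from data. -/
def coneTree (S : Finset (Fin n)) (g : ∀ i ∈ S, Fin (a i))
    (T : Finset H.E) : Finset (H.cone p a).E :=
  T.disjSum (S.attach.image (fun i => ⟨i.1, g i.1 i.2⟩))

lemma mem_coneTree_inl (S : Finset (Fin n)) (g : ∀ i ∈ S, Fin (a i)) (T : Finset H.E)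
    (e : H.E) : Sum.inl e ∈ coneTree H p a S g T ↔ e ∈ T := by
  rw [coneTree]; exact Finset.inl_mem_disjSum

lemma sigma_inj {n : ℕ} {a : Fin n → ℕ} (S : Finset (Fin n)) (g : ∀ i ∈ S, Fin (a i)) :
    Function.Injective (fun i : {x // x ∈ S} => (⟨i.1, g i.1 i.2⟩ : Σ i, Fin (a i))) := by
  intro x y hxy
  obtain ⟨h1, _⟩ := Sigma.mk.inj_iff.mp hxy
  exact Subtype.ext h1

lemma mem_coneTree_inr (S : Finset (Fin n)) (g : ∀ i ∈ S, Fin (a i)) (T : Finset H.E)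
    (i : Fin n) (j : Fin (a i)) :
    (Sum.inr ⟨i, j⟩ : (H.cone p a).E) ∈ coneTree H p a S g T ↔ ∃ h : i ∈ S, g i h = j := by
  rw [coneTree]; refine Finset.inr_mem_disjSum.trans ?_
  simp only [Finset.mem_image, Finset.mem_attach, true_and, Subtype.exists]
  constructor
  · rintro ⟨i', hi', he⟩
    obtain ⟨h1, h2⟩ := Sigma.mk.inj_iff.mp he
    subst h1
    exact ⟨hi', eq_of_heq h2⟩
  · rintro ⟨h, rfl⟩
    exact ⟨i, h, rfl⟩

lemma card_coneTree (S : Finset (Fin n)) (g : ∀ i ∈ S, Fin (a i)) (T : Finset H.E) :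
    (coneTree H p a S g T).card = T.card + S.card := by
  rw [coneTree]; refine (Finset.card_disjSum _ _).trans ?_; rw [Finset.card_image_of_injective _ (sigma_inj S g),
    Finset.card_attach]

end WMGAux
namespace WMGAux
open WMG

variable (H : WMG) {n : ℕ} (p : Fin n → H.V) (a : Fin n → ℕ)

lemma coneTree_spanning (hp : Function.Injective p) (S : Finset (Fin n)) (hS : S.Nonempty)
    (g : ∀ i ∈ S, Fin (a i)) (T : Finset H.E) (hT : (HS H p S).IsSpanningTree T) :
    (H.cone p a).IsSpanningTree (coneTree H p a S g T) := by
  obtain ⟨i₀, hi₀⟩ := hS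
  have hcone : ∀ i, ∀ hi : i ∈ S,
      estep (H.cone p a).ends (coneTree H p a S g T) none (some (p i)) :=
    fun i hi => ⟨Sum.inr ⟨i, g i hi⟩, (mem_coneTree_inr H p a S g T i _).mpr ⟨hi, rfl⟩,
      Or.inl rfl⟩
  have hmk : ∀ x y : H.V, Quot.mk (fun x y => x ∈ pset H p S ∧ y ∈ pset H p S) x =
      Quot.mk (fun x y => x ∈ pset H p S ∧ y ∈ pset H p S) y →
      ereach (H.cone p a).ends (coneTree H p a S g T) (some x) (some y) := by
    intro x y hxy
    rcases (quot_mk_eq_iff (hrS H p S)).mp hxy with rfl | ⟨⟨i, hi, rfl⟩, ⟨i', hi', rfl⟩⟩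
    · exact .refl
    · exact (Relation.ReflTransGen.single (estep_symm _ _ (hcone i hi))).tail (hcone i' hi')
  have hquot : ∀ c d : (HS H p S).V,
      Relation.ReflTransGen
        (fun x y => ∃ e ∈ T, (HS H p S).ends e = (x, y) ∨ (HS H p S).ends e = (y, x)) c d →
      ∀ x y : H.V, c = Quot.mk _ x → d = Quot.mk _ y →
        ereach (H.cone p a).ends (coneTree H p a S g T) (some x) (some y) := by
    intro c d h
    induction h with
    | refl => intro x y hx hy; exact hmk x y (by rw [← hx, hy])
    | @tail b d hab hstep ih =>
      intro x y hx hy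
      obtain ⟨e, he, hor | hor⟩ := hstep
      · have h1 := congrArg Prod.fst hor
        have h2 := congrArg Prod.snd hor
        simp only [HS_ends] at h1 h2
        refine ((ih x (H.ends e).1 hx h1.symm).tail ?_).trans
          (hmk (H.ends e).2 y (by rw [h2, hy]))
        exact ⟨Sum.inl e, (mem_coneTree_inl H p a S g T e).mpr he, Or.inl rfl⟩
      · have h1 := congrArg Prod.fst hor
        have h2 := congrArg Prod.snd hor
        simp only [HS_ends] at h1 h2
        refine ((ih x (H.ends e).2 hx h2.symm).tail ?_).trans
          (hmk (H.ends e).1 y (by rw [h1, hy]))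
        exact ⟨Sum.inl e, (mem_coneTree_inl H p a S g T e).mpr he, Or.inr rfl⟩
  constructor
  · intro u v
    match u, v with
    | some x, some y => exact hquot _ _ (hT.1 (Quot.mk _ x) (Quot.mk _ y)) x y rfl rfl
    | none, some y =>
      exact (Relation.ReflTransGen.single (hcone i₀ hi₀)).trans
        (hquot _ _ (hT.1 _ _) (p i₀) y rfl rfl)
    | some x, none =>
      exact ereach_symm _ _ ((Relation.ReflTransGen.single (hcone i₀ hi₀)).trans
        (hquot _ _ (hT.1 _ _) (p i₀) x rfl rfl))
    | none, none => exact .refl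
  · have hcard := card_HS H p hp S ⟨i₀, hi₀⟩
    have hT2 : T.card = _ := hT.2
    have hpos : 0 < @Fintype.card (HS H p S).V (HS H p S).instV :=
      @Fintype.card_pos _ _ ⟨Quot.mk _ (p i₀)⟩
    have hG : Fintype.card (H.cone p a).V = Fintype.card H.V + 1 := by
      exact Fintype.card_option
    rw [card_coneTree, hG]
    omega

end WMGAux
namespace WMGAux
open WMG

variable (H : WMG) {n : ℕ} (p : Fin n → H.V) (a : Fin n → ℕ)

lemma spanning_decomp (hp : Function.Injective p) (hn : 0 < n)
    (T' : Finset (H.cone p a).E) (hT' : (H.cone p a).IsSpanningTree T') :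
    ∃ (S : Finset (Fin n)) (g : ∀ i ∈ S, Fin (a i)) (T : Finset H.E),
      S.Nonempty ∧ (HS H p S).IsSpanningTree T ∧ coneTree H p a S g T = T' := by
  classical
  set S : Finset (Fin n) :=
    Finset.univ.filter (fun i => ∃ j : Fin (a i), (Sum.inr ⟨i, j⟩ : (H.cone p a).E) ∈ T') with hSdef
  have hmemS : ∀ i : Fin n, i ∈ S ↔ ∃ j : Fin (a i), (Sum.inr ⟨i, j⟩ : (H.cone p a).E) ∈ T' := by
    intro i; rw [hSdef]; simp
  -- S is nonempty
  have hS : S.Nonempty := by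
    have hreach := hT'.1 none (some (p ⟨0, hn⟩))
    rcases Relation.ReflTransGen.cases_head hreach with h | ⟨c, ⟨e, he, hor⟩, _⟩
    · exact absurd h (by simp)
    · rcases e with f | ⟨i, j⟩
      · exfalso
        rcases hor with h | h
        · exact Option.some_ne_none (H.ends f).1 (congrArg Prod.fst h)
        · exact Option.some_ne_none (H.ends f).2 (congrArg Prod.snd h)
      · exact ⟨i, (hmemS i).mpr ⟨j, he⟩⟩
  obtain ⟨i₀, hi₀⟩ := hS
  -- connectivity of the quotient graph via T'.toLeft
  have hSconn : ∀ c d : (HS H p S).V,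
      Relation.ReflTransGen
        (fun x y => ∃ e ∈ T'.toLeft, (HS H p S).ends e = (x, y) ∨ (HS H p S).ends e = (y, x))
        c d := by
    set r := fun x y : H.V => x ∈ pset H p S ∧ y ∈ pset H p S with hr
    let φ : (H.cone p a).V → (HS H p S).V := fun u =>
      match u with
      | none => Quot.mk r (p i₀)
      | some v => Quot.mk r v
    have hstep : ∀ u v : (H.cone p a).V, estep (H.cone p a).ends T' u v →
        Relation.ReflTransGen
          (fun x y => ∃ e ∈ T'.toLeft, (HS H p S).ends e = (x, y) ∨ (HS H p S).ends e = (y, x))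
          (φ u) (φ v) := by
      rintro u v ⟨e, he, hor⟩
      rcases e with f | ⟨i, j⟩
      · have hf : f ∈ T'.toLeft := Finset.mem_toLeft.mpr he
        rcases hor with h | h
        · obtain ⟨h1, h2⟩ := Prod.mk_inj.mp h
          rw [← h1, ← h2]
          exact Relation.ReflTransGen.single ⟨f, hf, Or.inl rfl⟩
        · obtain ⟨h1, h2⟩ := Prod.mk_inj.mp h
          rw [← h1, ← h2]
          exact Relation.ReflTransGen.single ⟨f, hf, Or.inr rfl⟩
      · have hiS : i ∈ S := (hmemS i).mpr ⟨j, he⟩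
        have hq : Quot.mk r (p i₀) = Quot.mk r (p i) :=
          Quot.sound ⟨⟨i₀, hi₀, rfl⟩, ⟨i, hiS, rfl⟩⟩
        rcases hor with h | h
        · obtain ⟨h1, h2⟩ := Prod.mk_inj.mp h
          rw [← h1, ← h2]
          show Relation.ReflTransGen _ (Quot.mk r (p i₀)) (Quot.mk r (p i))
          rw [hq]; exact .refl
        · obtain ⟨h1, h2⟩ := Prod.mk_inj.mp h
          rw [← h1, ← h2]
          show Relation.ReflTransGen _ (Quot.mk r (p i)) (Quot.mk r (p i₀))
          rw [hq]; exact .refl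
    have hlift : ∀ u v : (H.cone p a).V,
        ereach (H.cone p a).ends T' u v →
        Relation.ReflTransGen
          (fun x y => ∃ e ∈ T'.toLeft, (HS H p S).ends e = (x, y) ∨ (HS H p S).ends e = (y, x))
          (φ u) (φ v) := by
      intro u v h
      induction h with
      | refl => exact .refl
      | tail _ hst ih => exact ih.trans (hstep _ _ hst)
    intro c d
    obtain ⟨x, rfl⟩ := Quot.exists_rep c
    obtain ⟨y, rfl⟩ := Quot.exists_rep d
    exact hlift (some x) (some y) (hT'.1 (some x) (some y))
  -- cardinality forcing
  letI : Fintype (HS H p S).V := (HS H p S).instV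
  have hA2 : @Fintype.card (HS H p S).V (HS H p S).instV ≤ T'.toLeft.card + 1 :=
    card_le_of_connects (HS H p S).ends T'.toLeft hSconn
  have hA1 := card_HS H p hp S ⟨i₀, hi₀⟩
  have hA3 : T'.toLeft.card + T'.toRight.card = T'.card :=
    Finset.card_toLeft_add_card_toRight
  have hT'card : T'.card = Fintype.card H.V := by
    have := hT'.2
    have hG : Fintype.card (H.cone p a).V = Fintype.card H.V + 1 := Fintype.card_option
    omega
  have hfibmem : ∀ x ∈ T'.toRight, x.1 ∈ S := by
    intro x hx
    exact (hmemS x.1).mpr ⟨x.2, by rw [Sigma.eta]; exact Finset.mem_toRight.mp hx⟩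
  have hfib : T'.toRight.card =
      ∑ i ∈ S, (T'.toRight.filter (fun x => x.1 = i)).card :=
    Finset.card_eq_sum_card_fiberwise hfibmem
  have hone : ∀ i ∈ S, 1 ≤ (T'.toRight.filter (fun x => x.1 = i)).card := by
    intro i hi
    obtain ⟨j, hj⟩ := (hmemS i).mp hi
    exact Finset.card_pos.mpr ⟨⟨i, j⟩, Finset.mem_filter.mpr ⟨Finset.mem_toRight.mpr hj, rfl⟩⟩
  have hsum_ge : S.card ≤ ∑ i ∈ S, (T'.toRight.filter (fun x => x.1 = i)).card := by
    calc S.card = ∑ _i ∈ S, 1 := by simp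
      _ ≤ _ := Finset.sum_le_sum hone
  have hsum_eq : ∑ i ∈ S, (T'.toRight.filter (fun x => x.1 = i)).card = S.card := by omega
  have hall1 : ∀ i ∈ S, (T'.toRight.filter (fun x => x.1 = i)).card = 1 := by
    intro i hi
    by_contra hne
    have h2 : 2 ≤ (T'.toRight.filter (fun x => x.1 = i)).card := by
      have := hone i hi; omega
    have herase := Finset.add_sum_erase S
      (fun i => (T'.toRight.filter (fun x => x.1 = i)).card) hi
    have hrest : (S.erase i).card ≤
        ∑ j ∈ S.erase i, (T'.toRight.filter (fun x => x.1 = j)).card := by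
      calc (S.erase i).card = ∑ _j ∈ S.erase i, 1 := by simp
        _ ≤ _ := Finset.sum_le_sum (fun j hj => hone j (Finset.mem_of_mem_erase hj))
    have hcerase : (S.erase i).card = S.card - 1 := Finset.card_erase_of_mem hi
    have hS1 : 1 ≤ S.card := Finset.card_pos.mpr ⟨i, hi⟩
    omega
  -- uniqueness of the cone edge at each i ∈ S
  have huniq : ∀ i, ∀ _hi : i ∈ S, ∃! j : Fin (a i), (Sum.inr ⟨i, j⟩ : (H.cone p a).E) ∈ T' := by
    intro i hi
    obtain ⟨j, hj⟩ := (hmemS i).mp hi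
    refine ⟨j, hj, fun j' hj' => ?_⟩
    have hmem : ∀ k : Fin (a i), (Sum.inr ⟨i, k⟩ : (H.cone p a).E) ∈ T' →
        (⟨i, k⟩ : Σ i, Fin (a i)) ∈ T'.toRight.filter (fun x => x.1 = i) :=
      fun k hk => Finset.mem_filter.mpr ⟨Finset.mem_toRight.mpr hk, rfl⟩
    have := Finset.card_le_one.mp (le_of_eq (hall1 i hi)) _ (hmem j' hj') _ (hmem j hj)
    obtain ⟨_, h2⟩ := Sigma.mk.inj_iff.mp this
    exact eq_of_heq h2
  refine ⟨S, fun i hi => (huniq i hi).choose, T'.toLeft, ⟨i₀, hi₀⟩, ⟨hSconn, by show T'.toLeft.card = _; have hA2' : _ ≤ T'.toLeft.card + 1 := hA2; omega⟩, ?_⟩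
  ext e
  rcases e with f | ⟨i, j⟩
  · exact (mem_coneTree_inl H p a _ _ _ f).trans Finset.mem_toLeft
  · refine (mem_coneTree_inr H p a _ _ _ i j).trans ?_
    constructor
    · rintro ⟨hi, rfl⟩
      exact (huniq i hi).choose_spec.1
    · intro hj
      have hi : i ∈ S := (hmemS i).mpr ⟨j, hj⟩
      exact ⟨hi, ((huniq i hi).choose_spec.2 j hj).symm⟩

end WMGAux
namespace WMGAux
open WMG

variable (H : WMG) {n : ℕ} (p : Fin n → H.V) (a : Fin n → ℕ)

lemma card_pi_mem (S : Finset (Fin n)) :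
    Nat.card (∀ i ∈ S, Fin (a i)) = ∏ i ∈ S, a i := by
  rw [Nat.card_pi]
  have h : ∀ i : Fin n, Nat.card (i ∈ S → Fin (a i)) = if i ∈ S then a i else 1 := by
    intro i
    by_cases hi : i ∈ S
    · letI : Unique (i ∈ S) := uniqueProp hi
      rw [Nat.card_congr (Equiv.funUnique (i ∈ S) (Fin (a i))), Nat.card_eq_fintype_card,
        Fintype.card_fin, if_pos hi]
    · letI : IsEmpty (i ∈ S) := ⟨hi⟩
      rw [if_neg hi]
      exact Nat.card_unique
  calc ∏ i : Fin n, Nat.card (i ∈ S → Fin (a i))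
      = ∏ i ∈ Finset.univ, if i ∈ S then a i else 1 := Finset.prod_congr rfl (fun i _ => h i)
    _ = ∏ i ∈ Finset.univ ∩ S, a i := Finset.prod_ite_mem _ _ _
    _ = ∏ i ∈ S, a i := by rw [Finset.univ_inter]

lemma t_cone (hp : Function.Injective p) (hn : 0 < n) :
    (H.cone p a).t = ∑ S ∈ Finset.univ.filter (fun S : Finset (Fin n) => S.Nonempty),
      (∏ i ∈ S, a i) * (HS H p S).t := by
  classical
  set Fib : Finset (Fin n) → Type := fun S =>
    (∀ i ∈ S, Fin (a i)) × {T : Finset H.E // S.Nonempty ∧ (HS H p S).IsSpanningTree T}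
    with hFibdef
  have hbij : ∃ Ψ : (Σ S, Fib S) → {T' : Finset (H.cone p a).E // (H.cone p a).IsSpanningTree T'},
      Function.Bijective Ψ := by
    refine ⟨fun x => ⟨coneTree H p a x.1 x.2.1 x.2.2.1,
      coneTree_spanning H p a hp x.1 x.2.2.2.1 x.2.1 x.2.2.1 x.2.2.2.2⟩, ?_, ?_⟩
    · rintro ⟨S₁, g₁, T₁, hne₁, hsp₁⟩ ⟨S₂, g₂, T₂, hne₂, hsp₂⟩ heq
      have hct : coneTree H p a S₁ g₁ T₁ = coneTree H p a S₂ g₂ T₂ := congrArg Subtype.val heq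
      have hmem : ∀ (S : Finset (Fin n)) (g : ∀ i ∈ S, Fin (a i)) (T : Finset H.E) (i : Fin n),
          i ∈ S ↔ ∃ j, (Sum.inr ⟨i, j⟩ : (H.cone p a).E) ∈ coneTree H p a S g T := by
        intro S g T i
        constructor
        · intro hi; exact ⟨g i hi, (mem_coneTree_inr H p a S g T i _).mpr ⟨hi, rfl⟩⟩
        · rintro ⟨j, hj⟩
          obtain ⟨hi, -⟩ := (mem_coneTree_inr H p a S g T i j).mp hj
          exact hi
      have hSS : S₁ = S₂ := by
        ext i; rw [hmem S₁ g₁ T₁ i, hmem S₂ g₂ T₂ i, hct]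
      subst hSS
      have hgg : g₁ = g₂ := by
        funext i hi
        have h1 : (Sum.inr ⟨i, g₁ i hi⟩ : (H.cone p a).E) ∈ coneTree H p a S₁ g₂ T₂ := by
          rw [← hct]; exact (mem_coneTree_inr H p a S₁ g₁ T₁ i _).mpr ⟨hi, rfl⟩
        obtain ⟨hi', he⟩ := (mem_coneTree_inr H p a S₁ g₂ T₂ i _).mp h1
        exact he.symm
      have hTT : T₁ = T₂ := by
        ext e
        rw [← mem_coneTree_inl H p a S₁ g₁ T₁ e, ← mem_coneTree_inl H p a S₁ g₂ T₂ e, hct]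
      subst hgg; subst hTT
      rfl
    · rintro ⟨T', hT'⟩
      obtain ⟨S, g, T, hS, hsp, heq⟩ := spanning_decomp H p a hp hn T' hT'
      exact ⟨⟨S, g, T, hS, hsp⟩, Subtype.ext heq⟩
  obtain ⟨Ψ, hΨ⟩ := hbij
  have h1 : (H.cone p a).t = Nat.card (Σ S, Fib S) :=
    (Nat.card_congr (Equiv.ofBijective Ψ hΨ)).symm
  letI : ∀ S, Fintype (Fib S) := fun S => Fintype.ofFinite _
  rw [h1, Nat.card_eq_fintype_card, Fintype.card_sigma]
  have hFib : ∀ S : Finset (Fin n), Fintype.card (Fib S) =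
      if S.Nonempty then (∏ i ∈ S, a i) * (HS H p S).t else 0 := by
    intro S
    rw [← Nat.card_eq_fintype_card]
    rw [hFibdef]
    rw [Nat.card_prod, card_pi_mem]
    by_cases hS : S.Nonempty
    · rw [if_pos hS]
      congr 1
      exact Nat.card_congr (Equiv.subtypeEquivRight fun T => and_iff_right hS)
    · rw [if_neg hS]
      letI : IsEmpty {T : Finset H.E // S.Nonempty ∧ (HS H p S).IsSpanningTree T} :=
        ⟨fun T => hS T.2.1⟩
      rw [Nat.card_of_isEmpty, mul_zero]
  calc ∑ S : Finset (Fin n), Fintype.card (Fib S)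
      = ∑ S : Finset (Fin n), if S.Nonempty then (∏ i ∈ S, a i) * (HS H p S).t else 0 :=
        Finset.sum_congr rfl (fun S _ => hFib S)
    _ = _ := (Finset.sum_filter _ _).symm

end WMGAux
/-- Let `G` be a finite connected multigraph, `u` a non-cut vertex whose
neighbours are the distinct vertices `p 1, …, p n` (`n ≥ 2`), joined to `u` by
`a i ≥ 1` parallel edges respectively, and `H = G − u` (which is connected).
Then `t(G) = (∑ a_i) t(H) + ∑_{S ⊆ N_G(u), |S| ≥ 2} (∏_{i ∈ I_S} a_i) t(H_S)`,
where `H_S` is `H` with all the vertices of `S` identified.  (Here `G` is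
realized as the cone `H.cone p a` over `H`.) -/
theorem spanning_trees_vertex_deletion (H : WMG) (hH : H.Connected)
    (n : ℕ) (hn : 2 ≤ n) (p : Fin n → H.V) (hp : Function.Injective p)
    (a : Fin n → ℕ) (ha : ∀ i, 1 ≤ a i) :
    (H.cone p a).t =
      (∑ i, a i) * H.t +
        ∑ S ∈ Finset.univ.filter (fun S : Finset (Fin n) => 2 ≤ S.card),
          (∏ i ∈ S, a i) * (H.identSet {v | ∃ i ∈ S, v = p i}).t := by
  classical
  have hn0 : 0 < n := by omega
  rw [WMGAux.t_cone H p a hp hn0]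
  have hsplit : (Finset.univ.filter fun S : Finset (Fin n) => S.Nonempty)
      = (Finset.univ.filter fun S : Finset (Fin n) => S.card = 1)
        ∪ (Finset.univ.filter fun S : Finset (Fin n) => 2 ≤ S.card) := by
    ext S
    simp only [Finset.mem_union, Finset.mem_filter, Finset.mem_univ, true_and,
      ← Finset.card_pos]
    omega
  have hdisj : Disjoint (Finset.univ.filter fun S : Finset (Fin n) => S.card = 1)
      (Finset.univ.filter fun S : Finset (Fin n) => 2 ≤ S.card) := by
    rw [Finset.disjoint_left]
    intro S h1 h2
    simp only [Finset.mem_filter, Finset.mem_univ, true_and] at h1 h2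
    omega
  rw [hsplit, Finset.sum_union hdisj]
  congr 1
  -- singletons
  · have himg : (Finset.univ.filter fun S : Finset (Fin n) => S.card = 1)
        = Finset.univ.image (fun i : Fin n => ({i} : Finset (Fin n))) := by
      ext S
      simp [Finset.card_eq_one, eq_comm]
    rw [himg, Finset.sum_image (fun x _ y _ h => Finset.singleton_injective h),
      Finset.sum_mul]
    refine Finset.sum_congr rfl fun i _ => ?_
    rw [Finset.prod_singleton]
    congr 1
    refine H.t_quot_trivial _ ?_
    rintro x y ⟨⟨j, hj, rfl⟩, ⟨k, hk, rfl⟩⟩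
    rw [Finset.mem_singleton.mp hj, Finset.mem_singleton.mp hk]
end

section
/- Let a ≥ 1 and n ≥ 2 be integers and let F̄an_n be the modified fan graph: the path graph P_n with vertices p₁, …, p_n together with one new vertex p joined to each p_i by a parallel edges. Then t(F̄an_n) = a·B_{n−1}(a), where B_m(x) = Σ_{k=0}^{m} C(m+k+1, m−k)·x^k is the m-th Morgan–Voyce polynomial. In particular, when a = 1, t(Fan_n) = F_{2n}, the (2n)-th Fibonacci number. -/
open scoped Classical

namespace FanProof

open Finset

/-- pair `(B_m, D_m)`: Morgan–Voyce value at `a` and its difference sequence. -/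
def BB (a : ℕ) : ℕ → ℕ × ℕ
  | 0 => (1, 1)
  | m + 1 => ((BB a m).1 + (a * (BB a m).1 + (BB a m).2), a * (BB a m).1 + (BB a m).2)

section Alphabet

variable {a : ℕ}

def neEquiv (a : ℕ) :
    {x : Fin a ⊕ Bool // x ≠ Sum.inr false ∧ x ≠ Sum.inr true} ≃ Fin a where
  toFun x :=
    match x with
    | ⟨Sum.inl j, _⟩ => j
    | ⟨Sum.inr false, h⟩ => absurd rfl h.1
    | ⟨Sum.inr true, h⟩ => absurd rfl h.2
  invFun j := ⟨Sum.inl j, by simp, by simp⟩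
  left_inv x :=
    match x with
    | ⟨Sum.inl j, _⟩ => rfl
    | ⟨Sum.inr false, h⟩ => absurd rfl h.1
    | ⟨Sum.inr true, h⟩ => absurd rfl h.2
  right_inv j := rfl

lemma card_iff {α : Type} {p q : α → Prop} [Fintype {x // p x}] [Fintype {x // q x}]
    (h : ∀ x, p x ↔ q x) : Fintype.card {x // p x} = Fintype.card {x // q x} :=
  Fintype.card_congr (Equiv.subtypeEquivRight h)

def neREquiv (a : ℕ) : {x : Fin a ⊕ Bool // x ≠ Sum.inr true} ≃ Option (Fin a) where
  toFun x :=
    match x with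
    | ⟨Sum.inl j, _⟩ => some j
    | ⟨Sum.inr false, _⟩ => none
    | ⟨Sum.inr true, h⟩ => absurd rfl h
  invFun o :=
    match o with
    | some j => ⟨Sum.inl j, by simp⟩
    | none => ⟨Sum.inr false, by simp⟩
  left_inv x :=
    match x with
    | ⟨Sum.inl j, _⟩ => rfl
    | ⟨Sum.inr false, _⟩ => rfl
    | ⟨Sum.inr true, h⟩ => absurd rfl h
  right_inv o := match o with | some _ => rfl | none => rfl

def eqREquiv (a : ℕ) : {x : Fin a ⊕ Bool // x = Sum.inr true} ≃ PUnit.{1} where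
  toFun _ := PUnit.unit
  invFun _ := ⟨Sum.inr true, rfl⟩
  left_inv x := Subtype.ext x.2.symm
  right_inv _ := rfl

lemma card_ne_LR [inst : Fintype {x : Fin a ⊕ Bool // x ≠ Sum.inr false ∧ x ≠ Sum.inr true}] :
    Fintype.card {x : Fin a ⊕ Bool // x ≠ Sum.inr false ∧ x ≠ Sum.inr true} = a :=
  (Fintype.card_congr (neEquiv a)).trans (Fintype.card_fin a)

lemma card_ne_R [inst : Fintype {x : Fin a ⊕ Bool // x ≠ Sum.inr true}] :
    Fintype.card {x : Fin a ⊕ Bool // x ≠ Sum.inr true} = a + 1 :=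
  (Fintype.card_congr (neREquiv a)).trans (by simp)

lemma card_eq_R [inst : Fintype {x : Fin a ⊕ Bool // x = Sum.inr true}] :
    Fintype.card {x : Fin a ⊕ Bool // x = Sum.inr true} = 1 :=
  (Fintype.card_congr (eqREquiv a)).trans (by simp)

end Alphabet

section Words

variable {a m : ℕ}

def Pre {a m : ℕ} (f : Fin (m + 1) → Fin a ⊕ Bool) : Prop :=
  f 0 ≠ Sum.inr false ∧
    ∀ i : Fin m, ¬(f i.castSucc = Sum.inr true ∧ f i.succ = Sum.inr false)

def Good {a m : ℕ} (f : Fin (m + 1) → Fin a ⊕ Bool) : Prop :=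
  Pre f ∧ f (Fin.last m) ≠ Sum.inr true

def PreR {a m : ℕ} (f : Fin (m + 1) → Fin a ⊕ Bool) : Prop :=
  Pre f ∧ f (Fin.last m) = Sum.inr true

noncomputable def NC (a m : ℕ) : ℕ :=
  Fintype.card {f : Fin (m + 1) → Fin a ⊕ Bool // Good f}

noncomputable def NR (a m : ℕ) : ℕ :=
  Fintype.card {f : Fin (m + 1) → Fin a ⊕ Bool // PreR f}

def goodOneEquiv (a : ℕ) : {f : Fin 1 → Fin a ⊕ Bool // Good f} ≃
    {x : Fin a ⊕ Bool // x ≠ Sum.inr false ∧ x ≠ Sum.inr true} where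
  toFun f := ⟨f.1 0, f.2.1.1, f.2.2⟩
  invFun x := ⟨fun _ => x.1, ⟨x.2.1, fun i => i.elim0⟩, x.2.2⟩
  left_inv f := Subtype.ext (funext fun i => congrArg f.1 (Fin.eq_zero i).symm)
  right_inv _ := rfl

def preROneEquiv (a : ℕ) : {f : Fin 1 → Fin a ⊕ Bool // PreR f} ≃
    {x : Fin a ⊕ Bool // x = Sum.inr true} where
  toFun f := ⟨f.1 0, f.2.2⟩
  invFun x := ⟨fun _ => x.1, ⟨by rw [x.2]; simp, fun i => i.elim0⟩, x.2⟩
  left_inv f := Subtype.ext (funext fun i => congrArg f.1 (Fin.eq_zero i).symm)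
  right_inv _ := rfl

lemma NC_zero : NC a 0 = a :=
  (Fintype.card_congr (goodOneEquiv a)).trans card_ne_LR

lemma NR_zero : NR a 0 = 1 :=
  (Fintype.card_congr (preROneEquiv a)).trans card_eq_R

lemma card_snoc {β : Type} [Fintype β] {m : ℕ} (Q : (Fin (m + 2) → β) → Prop) :
    Fintype.card {f : Fin (m + 2) → β // Q f} =
      ∑ g : Fin (m + 1) → β, Fintype.card {x : β // Q (Fin.snoc g x)} := by
  rw [← Fintype.card_sigma]
  symm
  apply Fintype.card_of_bijective
    (f := fun s : Σ g : Fin (m + 1) → β, {x : β // Q (Fin.snoc g x)} =>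
      (⟨Fin.snoc s.1 s.2.1, s.2.2⟩ : {f : Fin (m + 2) → β // Q f}))
  constructor
  · rintro ⟨g, x, hx⟩ ⟨g', x', hx'⟩ h
    simp only [Subtype.mk.injEq] at h
    have hg : g = g' := by
      funext i
      have h2 := congrFun h i.castSucc
      rwa [Fin.snoc_castSucc, Fin.snoc_castSucc] at h2
    subst hg
    have hxx : x = x' := by
      have h2 := congrFun h (Fin.last (m + 1))
      rwa [Fin.snoc_last, Fin.snoc_last] at h2
    subst hxx
    rfl
  · rintro ⟨f, hf⟩
    exact ⟨⟨Fin.init f, f (Fin.last _), by rwa [Fin.snoc_init_self]⟩,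
      Subtype.ext (Fin.snoc_init_self f)⟩

lemma pre_snoc (g : Fin (m + 1) → Fin a ⊕ Bool) (x : Fin a ⊕ Bool) :
    Pre (Fin.snoc g x) ↔
      Pre g ∧ ¬(g (Fin.last m) = Sum.inr true ∧ x = Sum.inr false) := by
  have h0 : (Fin.snoc g x : Fin (m + 2) → Fin a ⊕ Bool) 0 = g 0 := by
    rw [← Fin.castSucc_zero, Fin.snoc_castSucc]
  constructor
  · rintro ⟨h1, h2⟩
    refine ⟨⟨by rwa [h0] at h1, fun i => ?_⟩, ?_⟩
    · have h := h2 i.castSucc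
      rwa [Fin.snoc_castSucc, Fin.succ_castSucc, Fin.snoc_castSucc] at h
    · have h := h2 (Fin.last m)
      rwa [Fin.snoc_castSucc, Fin.succ_last, Fin.snoc_last] at h
  · rintro ⟨⟨h1, h2⟩, h3⟩
    refine ⟨by rwa [h0], fun i => ?_⟩
    refine Fin.lastCases ?_ ?_ i
    · rw [Fin.snoc_castSucc, Fin.succ_last, Fin.snoc_last]
      exact h3
    · intro j
      rw [Fin.snoc_castSucc, Fin.succ_castSucc, Fin.snoc_castSucc]
      exact h2 j

lemma key_sum (u v : ℕ) :
    (∑ g : Fin (m + 1) → Fin a ⊕ Bool,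
        if Good g then u else if PreR g then v else 0) = u * NC a m + v * NR a m := by
  have hpt : ∀ g : Fin (m + 1) → Fin a ⊕ Bool,
      (if Good g then u else if PreR g then v else 0) =
        u * (if Good g then 1 else 0) + v * (if PreR g then 1 else 0) := by
    intro g
    by_cases h1 : Good g
    · have h2 : ¬PreR g := fun h => h1.2 h.2
      simp [h1, h2]
    · simp [h1]
  rw [Finset.sum_congr rfl fun g _ => hpt g, Finset.sum_add_distrib, ← Finset.mul_sum,
    ← Finset.mul_sum, ← Finset.card_filter, ← Finset.card_filter, NC, NR,
    Fintype.card_subtype, Fintype.card_subtype]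

lemma NC_succ : NC a (m + 1) = (a + 1) * NC a m + a * NR a m := by
  have hQ : ∀ (g : Fin (m + 1) → Fin a ⊕ Bool) (x : Fin a ⊕ Bool),
      Good (Fin.snoc g x : Fin (m + 2) → Fin a ⊕ Bool) ↔
        ((Pre g ∧ ¬(g (Fin.last m) = Sum.inr true ∧ x = Sum.inr false)) ∧
          x ≠ Sum.inr true) := by
    intro g x
    rw [Good, pre_snoc, Fin.snoc_last]
  rw [show NC a (m+1) = Fintype.card {f : Fin (m + 2) → Fin a ⊕ Bool // Good f} from rfl,
    card_snoc]
  have hcard : ∀ g : Fin (m + 1) → Fin a ⊕ Bool,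
      Fintype.card {x : Fin a ⊕ Bool // Good (Fin.snoc g x : Fin (m + 2) → Fin a ⊕ Bool)} =
        if Good g then a + 1 else if PreR g then a else 0 := by
    intro g
    by_cases hp : Pre g
    · by_cases hr : g (Fin.last m) = Sum.inr true
      · rw [if_neg (fun h : Good g => h.2 hr), if_pos ⟨hp, hr⟩]
        refine Eq.trans (card_iff fun x => ?_) card_ne_LR
        rw [hQ]
        constructor
        · rintro ⟨⟨-, h2⟩, h3⟩
          exact ⟨fun hL => h2 ⟨hr, hL⟩, h3⟩
        · rintro ⟨h1, h2⟩
          exact ⟨⟨hp, fun hc => h1 hc.2⟩, h2⟩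
      · rw [if_pos ⟨hp, hr⟩]
        refine Eq.trans (card_iff fun x => ?_) card_ne_R
        rw [hQ]
        constructor
        · rintro ⟨-, h3⟩
          exact h3
        · intro h3
          exact ⟨⟨hp, fun hc => hr hc.1⟩, h3⟩
    · rw [if_neg (fun h : Good g => hp h.1), if_neg (fun h : PreR g => hp h.1)]
      rw [Fintype.card_eq_zero_iff]
      exact ⟨fun x => hp ((hQ _ _).1 x.2).1.1⟩
  rw [Finset.sum_congr rfl fun g _ => hcard g, key_sum]

lemma NR_succ : NR a (m + 1) = NC a m + NR a m := by
  have hQ : ∀ (g : Fin (m + 1) → Fin a ⊕ Bool) (x : Fin a ⊕ Bool),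
      PreR (Fin.snoc g x : Fin (m + 2) → Fin a ⊕ Bool) ↔
        ((Pre g ∧ ¬(g (Fin.last m) = Sum.inr true ∧ x = Sum.inr false)) ∧
          x = Sum.inr true) := by
    intro g x
    rw [PreR, pre_snoc, Fin.snoc_last]
  rw [show NR a (m+1) = Fintype.card {f : Fin (m + 2) → Fin a ⊕ Bool // PreR f} from rfl,
    card_snoc]
  have hcard : ∀ g : Fin (m + 1) → Fin a ⊕ Bool,
      Fintype.card {x : Fin a ⊕ Bool // PreR (Fin.snoc g x : Fin (m + 2) → Fin a ⊕ Bool)} =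
        if Good g then 1 else if PreR g then 1 else 0 := by
    intro g
    by_cases hp : Pre g
    · have hgen : Fintype.card
          {x : Fin a ⊕ Bool // PreR (Fin.snoc g x : Fin (m + 2) → Fin a ⊕ Bool)} = 1 := by
        refine Eq.trans (card_iff fun x => ?_) card_eq_R
        rw [hQ]
        constructor
        · rintro ⟨-, h3⟩
          exact h3
        · intro h3
          refine ⟨⟨hp, ?_⟩, h3⟩
          rintro ⟨-, hL⟩
          rw [h3] at hL
          simp at hL
      by_cases hr : g (Fin.last m) = Sum.inr true
      · rwa [if_neg (fun h : Good g => h.2 hr), if_pos ⟨hp, hr⟩]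
      · rwa [if_pos ⟨hp, hr⟩]
    · rw [if_neg (fun h : Good g => hp h.1), if_neg (fun h : PreR g => hp h.1)]
      rw [Fintype.card_eq_zero_iff]
      exact ⟨fun x => hp ((hQ _ _).1 x.2).1.1⟩
  rw [Finset.sum_congr rfl fun g _ => hcard g, key_sum, one_mul, one_mul]

lemma NC_NR_eq (a : ℕ) : ∀ m, NC a m = a * (BB a m).1 ∧ NR a m = (BB a m).2
  | 0 => by
    refine ⟨?_, ?_⟩
    · rw [NC_zero]; simp [BB]
    · rw [NR_zero]; simp [BB]
  | m + 1 => by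
    obtain ⟨h1, h2⟩ := NC_NR_eq a m
    constructor
    · rw [NC_succ, h1, h2]
      show _ = a * ((BB a m).1 + (a * (BB a m).1 + (BB a m).2))
      ring
    · rw [NR_succ, h1, h2]
      show _ = a * (BB a m).1 + (BB a m).2
      ring

end Words

lemma mv_alt (m : ℕ) (x : ℝ) :
    morganVoyce m x = ∑ k ∈ range (m + 1), (Nat.choose (m + k + 1) (2 * k + 1) : ℝ) * x ^ k := by
  unfold morganVoyce
  refine sum_congr rfl fun k hk => ?_
  rw [mem_range] at hk
  have h1 : m - k = (m + k + 1) - (2 * k + 1) := by omega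
  rw [h1, Nat.choose_symm (by omega)]

lemma natid (m j : ℕ) :
    Nat.choose (m + j + 4) (2 * j + 3) + Nat.choose (m + j + 2) (2 * j + 3) =
      Nat.choose (m + j + 2) (2 * j + 1) + 2 * Nat.choose (m + j + 3) (2 * j + 3) := by
  have p1 : Nat.choose (m + j + 3 + 1) (2 * j + 2 + 1) =
      Nat.choose (m + j + 3) (2 * j + 2) + Nat.choose (m + j + 3) (2 * j + 2 + 1) :=
    Nat.choose_succ_succ' _ _
  have p2 : Nat.choose (m + j + 2 + 1) (2 * j + 1 + 1) =
      Nat.choose (m + j + 2) (2 * j + 1) + Nat.choose (m + j + 2) (2 * j + 1 + 1) :=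
    Nat.choose_succ_succ' _ _
  have p3 : Nat.choose (m + j + 2 + 1) (2 * j + 2 + 1) =
      Nat.choose (m + j + 2) (2 * j + 2) + Nat.choose (m + j + 2) (2 * j + 2 + 1) :=
    Nat.choose_succ_succ' _ _
  have e1 : m + j + 3 + 1 = m + j + 4 := by omega
  have e2 : 2 * j + 2 + 1 = 2 * j + 3 := by omega
  have e3 : m + j + 2 + 1 = m + j + 3 := by omega
  have e4 : 2 * j + 1 + 1 = 2 * j + 2 := by omega
  rw [e1, e2] at p1
  rw [e3, e4] at p2
  rw [e3, e2] at p3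
  omega

lemma mv_rec (m : ℕ) (x : ℝ) :
    morganVoyce (m + 2) x = (x + 2) * morganVoyce (m + 1) x - morganVoyce m x := by
  rw [mv_alt, mv_alt, mv_alt]
  -- normalize index expressions
  have hS2 : ∑ k ∈ range (m + 2 + 1), (Nat.choose (m + 2 + k + 1) (2 * k + 1) : ℝ) * x ^ k =
      ∑ k ∈ range (m + 3), (Nat.choose (m + k + 3) (2 * k + 1) : ℝ) * x ^ k := by
    refine sum_congr (by norm_num) fun k _ => ?_
    have : m + 2 + k + 1 = m + k + 3 := by omega
    rw [this]
  have hS1 : ∑ k ∈ range (m + 1 + 1), (Nat.choose (m + 1 + k + 1) (2 * k + 1) : ℝ) * x ^ k =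
      ∑ k ∈ range (m + 3), (Nat.choose (m + k + 2) (2 * k + 1) : ℝ) * x ^ k := by
    rw [sum_range_succ (fun k => (Nat.choose (m + k + 2) (2 * k + 1) : ℝ) * x ^ k) (m + 2)]
    rw [Nat.choose_eq_zero_of_lt (by omega)]
    push_cast
    rw [zero_mul, add_zero]
    refine sum_congr (by norm_num) fun k _ => ?_
    have : m + 1 + k + 1 = m + k + 2 := by omega
    rw [this]
  have hS0 : ∑ k ∈ range (m + 1), (Nat.choose (m + k + 1) (2 * k + 1) : ℝ) * x ^ k =
      ∑ k ∈ range (m + 3), (Nat.choose (m + k + 1) (2 * k + 1) : ℝ) * x ^ k := by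
    rw [sum_range_succ (fun k => (Nat.choose (m + k + 1) (2 * k + 1) : ℝ) * x ^ k) (m + 2),
      sum_range_succ (fun k => (Nat.choose (m + k + 1) (2 * k + 1) : ℝ) * x ^ k) (m + 1),
      Nat.choose_eq_zero_of_lt (by omega), Nat.choose_eq_zero_of_lt (by omega)]
    push_cast
    ring
  rw [hS2, hS1, hS0]
  -- x * S1 as a shifted sum
  have hx : x * ∑ k ∈ range (m + 3), (Nat.choose (m + k + 2) (2 * k + 1) : ℝ) * x ^ k =
      ∑ k ∈ range (m + 3),
        (if k = 0 then (0 : ℝ) else (Nat.choose (m + k + 1) (2 * k - 1) : ℝ)) * x ^ k := by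
    set F : ℕ → ℝ :=
      fun k => (if k = 0 then (0 : ℝ) else (Nat.choose (m + k + 1) (2 * k - 1) : ℝ)) * x ^ k
      with hF
    have A := Finset.sum_range_succ' F (m + 3)
    have B := Finset.sum_range_succ F (m + 3)
    have hF0 : F 0 = 0 := by rw [hF]; simp
    have hFm3 : F (m + 3) = 0 := by
      rw [hF]
      simp only []
      rw [if_neg (by omega : ¬(m + 3 = 0)), Nat.choose_eq_zero_of_lt (by omega)]
      push_cast
      ring
    have hstep : x * ∑ k ∈ range (m + 3), (Nat.choose (m + k + 2) (2 * k + 1) : ℝ) * x ^ k =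
        ∑ k ∈ range (m + 3), F (k + 1) := by
      rw [Finset.mul_sum]
      refine sum_congr rfl fun k _ => ?_
      rw [hF]
      simp only []
      rw [if_neg (by omega : ¬(k + 1 = 0))]
      have h3 : m + (k + 1) + 1 = m + k + 2 := by omega
      have h4 : 2 * (k + 1) - 1 = 2 * k + 1 := by omega
      rw [h3, h4]
      ring
    rw [hstep]
    linarith [A, B, hF0, hFm3]
  have expand : (x + 2) * ∑ k ∈ range (m + 3), (Nat.choose (m + k + 2) (2 * k + 1) : ℝ) * x ^ k -
      ∑ k ∈ range (m + 3), (Nat.choose (m + k + 1) (2 * k + 1) : ℝ) * x ^ k =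
      ∑ k ∈ range (m + 3),
        ((if k = 0 then (0 : ℝ) else (Nat.choose (m + k + 1) (2 * k - 1) : ℝ)) * x ^ k +
          2 * ((Nat.choose (m + k + 2) (2 * k + 1) : ℝ) * x ^ k) -
          (Nat.choose (m + k + 1) (2 * k + 1) : ℝ) * x ^ k) := by
    rw [Finset.sum_sub_distrib, Finset.sum_add_distrib, ← hx, ← Finset.mul_sum]
    ring
  rw [expand]
  refine sum_congr rfl fun k _ => ?_
  rcases k with _ | j
  · rw [if_pos rfl]
    have c1 : Nat.choose (m + 0 + 3) (2 * 0 + 1) = m + 3 := by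
      simp [Nat.choose_one_right]
    have c2 : Nat.choose (m + 0 + 2) (2 * 0 + 1) = m + 2 := by
      simp [Nat.choose_one_right]
    have c3 : Nat.choose (m + 0 + 1) (2 * 0 + 1) = m + 1 := by
      simp [Nat.choose_one_right]
    rw [c1, c2, c3]
    push_cast
    ring
  · rw [if_neg (by omega : ¬(j + 1 = 0))]
    have h := natid m j
    have e1 : m + (j + 1) + 3 = m + j + 4 := by omega
    have e2 : 2 * (j + 1) + 1 = 2 * j + 3 := by omega
    have e3 : m + (j + 1) + 1 = m + j + 2 := by omega
    have e4 : 2 * (j + 1) - 1 = 2 * j + 1 := by omega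
    have e5 : m + (j + 1) + 2 = m + j + 3 := by omega
    rw [e1, e2, e3, e4, e5]
    have hc : (Nat.choose (m + j + 4) (2 * j + 3) : ℝ) =
        (Nat.choose (m + j + 2) (2 * j + 1) : ℝ) + 2 * (Nat.choose (m + j + 3) (2 * j + 3) : ℝ) -
          (Nat.choose (m + j + 2) (2 * j + 3) : ℝ) := by
      have := congrArg (Nat.cast : ℕ → ℝ) h
      push_cast at this
      linarith
    rw [hc]
    ring

lemma BB_fst_rec (a m : ℕ) :
    ((BB a (m + 2)).1 : ℝ) = ((a : ℝ) + 2) * ((BB a (m + 1)).1 : ℝ) - ((BB a m).1 : ℝ) := by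
  have h1 : (BB a (m + 2)).1 + (BB a m).1 = (a + 2) * (BB a (m + 1)).1 := by
    simp only [BB]
    ring
  have := congrArg (Nat.cast : ℕ → ℝ) h1
  push_cast at this
  linarith

lemma mv_BB (a : ℕ) : ∀ m, morganVoyce m (a : ℝ) = ((BB a m).1 : ℝ)
  | 0 => by
    simp [morganVoyce, BB]
  | 1 => by
    rw [morganVoyce, Finset.sum_range_succ, Finset.sum_range_one]
    show (Nat.choose 2 1 : ℝ) * _ + (Nat.choose 3 0 : ℝ) * _ = ((BB a 1).1 : ℝ)
    simp [BB]
    push_cast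
    ring
  | m + 2 => by
    rw [mv_rec, mv_BB a (m + 1), mv_BB a m, BB_fst_rec]

lemma BB_one : ∀ m, (BB 1 m).1 = Nat.fib (2 * m + 2) ∧ (BB 1 m).2 = Nat.fib (2 * m + 1)
  | 0 => by simp [BB]
  | m + 1 => by
    obtain ⟨h1, h2⟩ := BB_one m
    have hf1 : Nat.fib (2 * (m + 1) + 1) = Nat.fib (2 * m + 1) + Nat.fib (2 * m + 2) := by
      have := Nat.fib_add_two (n := 2 * m + 1)
      rw [show 2 * m + 1 + 2 = 2 * (m + 1) + 1 by omega,
        show 2 * m + 1 + 1 = 2 * m + 2 by omega] at this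
      omega
    have hf2 : Nat.fib (2 * (m + 1) + 2) = Nat.fib (2 * m + 2) + Nat.fib (2 * (m + 1) + 1) := by
      have := Nat.fib_add_two (n := 2 * m + 2)
      rw [show 2 * m + 2 + 2 = 2 * (m + 1) + 2 by omega,
        show 2 * m + 2 + 1 = 2 * (m + 1) + 1 by omega] at this
      omega
    constructor
    · show (BB 1 m).1 + (1 * (BB 1 m).1 + (BB 1 m).2) = _
      rw [h1, h2, hf2, hf1]
      ring
    · show 1 * (BB 1 m).1 + (BB 1 m).2 = _
      rw [h1, h2, hf1]
      ring


section Graph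

variable {a m : ℕ}

-- `(fanGraph (m+1) a).E` is definitionally `Fin m ⊕ (Σ _ : Fin (m+1), Fin a)`.

lemma fan_ends_inl (k : Fin m) :
    (WMG.fanGraph (m + 1) a).ends (Sum.inl k) = (some k.castSucc, some k.succ) := rfl

lemma fan_ends_inr (s : Σ _ : Fin (m + 1), Fin a) :
    (WMG.fanGraph (m + 1) a).ends (Sum.inr s) = (none, some s.1) := rfl

lemma fan_card_V : Fintype.card (WMG.fanGraph (m + 1) a).V = m + 2 := by
  have h : Fintype.card (WMG.fanGraph (m + 1) a).V = Fintype.card (Option (Fin (m + 1))) :=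
    Fintype.card_congr (Equiv.refl _)
  rw [h]
  simp

def treeP (f : Fin (m + 1) → Fin a ⊕ Bool) : (WMG.fanGraph (m + 1) a).E → Prop := fun e =>
  match e with
  | Sum.inl k => f k.castSucc = Sum.inr true ∨ f k.succ = Sum.inr false
  | Sum.inr s => f s.1 = Sum.inl s.2

noncomputable def treeE (f : Fin (m + 1) → Fin a ⊕ Bool) :
    Finset (WMG.fanGraph (m + 1) a).E :=
  Finset.univ.filter (treeP f)

lemma mem_treeE {f : Fin (m + 1) → Fin a ⊕ Bool} {e : (WMG.fanGraph (m + 1) a).E} :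
    e ∈ treeE f ↔ treeP f e := by
  simp [treeE]

lemma mem_treeE_inl {f : Fin (m + 1) → Fin a ⊕ Bool} {k : Fin m} :
    (Sum.inl k : (WMG.fanGraph (m + 1) a).E) ∈ treeE f ↔
      (f k.castSucc = Sum.inr true ∨ f k.succ = Sum.inr false) :=
  mem_treeE

lemma mem_treeE_inr {f : Fin (m + 1) → Fin a ⊕ Bool} {s : Σ _ : Fin (m + 1), Fin a} :
    (Sum.inr s : (WMG.fanGraph (m + 1) a).E) ∈ treeE f ↔ f s.1 = Sum.inl s.2 :=
  mem_treeE

/-- the vertex that an edge of the tree is the parent edge of -/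
def own (f : Fin (m + 1) → Fin a ⊕ Bool) : (WMG.fanGraph (m + 1) a).E → Fin (m + 1) :=
  fun e =>
    match e with
    | Sum.inl k => if f k.castSucc = Sum.inr true then k.castSucc else k.succ
    | Sum.inr s => s.1

lemma own_inl (f : Fin (m + 1) → Fin a ⊕ Bool) (k : Fin m) :
    own f (Sum.inl k) = if f k.castSucc = Sum.inr true then k.castSucc else k.succ := rfl

lemma own_inr (f : Fin (m + 1) → Fin a ⊕ Bool) (s : Σ _ : Fin (m + 1), Fin a) :
    own f (Sum.inr s) = s.1 := rfl

lemma treeE_card {f : Fin (m + 1) → Fin a ⊕ Bool} (hf : Good f) :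
    (treeE f).card = m + 1 := by
  have h : (treeE f).card = (Finset.univ : Finset (Fin (m + 1))).card := by
    apply Finset.card_bij (i := fun e _ => own f e)
    · intro e he
      exact Finset.mem_univ _
    · -- injectivity
      intro e1 he1 e2 he2 heq
      match e1, e2 with
      | Sum.inl k1, Sum.inl k2 =>
        replace he1 := mem_treeE_inl.1 he1
        replace he2 := mem_treeE_inl.1 he2
        replace heq := (own_inl f k1).symm.trans (heq.trans (own_inl f k2))
        split_ifs at heq with h1 h2 h2
        · rw [Fin.castSucc_inj.1 heq]
        · rw [heq] at h1
          rcases he2 with hA | hB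
          · exact absurd hA h2
          · rw [h1] at hB
            simp at hB
        · rcases he1 with hA | hB
          · exact absurd hA h1
          · rw [heq, h2] at hB
            simp at hB
        · rw [Fin.succ_inj.1 heq]
      | Sum.inl k1, Sum.inr s2 =>
        replace he1 := mem_treeE_inl.1 he1
        replace he2 := mem_treeE_inr.1 he2
        replace heq := (own_inl f k1).symm.trans (heq.trans (own_inr f s2))
        split_ifs at heq with h1
        · rw [← heq] at he2
          rw [h1] at he2
          simp at he2
        · rcases he1 with hA | hB
          · exact absurd hA h1
          · rw [heq, he2] at hB
            simp at hB
      | Sum.inr s1, Sum.inl k2 =>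
        replace he1 := mem_treeE_inr.1 he1
        replace he2 := mem_treeE_inl.1 he2
        replace heq := (own_inr f s1).symm.trans (heq.trans (own_inl f k2))
        split_ifs at heq with h1
        · rw [heq] at he1
          rw [h1] at he1
          simp at he1
        · rcases he2 with hA | hB
          · exact absurd hA h1
          · rw [← heq, he1] at hB
            simp at hB
      | Sum.inr ⟨i1, j1⟩, Sum.inr ⟨i2, j2⟩ =>
        replace he1 := mem_treeE_inr.1 he1
        replace he2 := mem_treeE_inr.1 he2
        rw [own_inr, own_inr] at heq
        simp only [] at heq he1 he2
        subst heq
        rw [he1] at he2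
        simp only [Sum.inl.injEq] at he2
        rw [he2]
    · -- surjectivity
      intro v _
      rcases hv : f v with j | b
      · refine ⟨Sum.inr ⟨v, j⟩, mem_treeE_inr.2 hv, rfl⟩
      · cases b
        · -- f v = L, parent is left edge
          have hv0 : v.1 ≠ 0 := by
            intro h0
            exact hf.1.1 (by rw [← show v = 0 from Fin.ext h0]; exact hv)
          have hvm : v.1 - 1 < m := by
            have := v.2
            omega
          refine ⟨Sum.inl ⟨v.1 - 1, hvm⟩, ?_, ?_⟩
          · refine mem_treeE_inl.2 (Or.inr ?_)
            rw [show Fin.succ ⟨v.1 - 1, hvm⟩ = v from Fin.ext (by simp; omega)]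
            exact hv
          · rw [own_inl]
            rw [if_neg, show Fin.succ ⟨v.1 - 1, hvm⟩ = v from Fin.ext (by simp; omega)]
            intro hc
            refine hf.1.2 ⟨v.1 - 1, hvm⟩ ⟨hc, ?_⟩
            rw [show Fin.succ ⟨v.1 - 1, hvm⟩ = v from Fin.ext (by simp; omega)]
            exact hv
        · -- f v = R, parent is right edge
          have hvm : v.1 < m := by
            have h2 : v.1 ≠ m := by
              intro h0
              exact hf.2 (by rw [← show v = Fin.last m from Fin.ext (by simpa using h0)]; exact hv)
            have := v.2
            omega
          have hcs : Fin.castSucc ⟨v.1, hvm⟩ = v := Fin.ext (by simp)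
          refine ⟨Sum.inl ⟨v.1, hvm⟩, mem_treeE_inl.2 (Or.inl (by rw [hcs]; exact hv)), ?_⟩
          rw [own_inl, if_pos (by rw [hcs]; exact hv), hcs]
  rw [h, Finset.card_univ, Fintype.card_fin]

/-- single-step adjacency via edges of `T` -/
def Rel (T : Finset (WMG.fanGraph (m + 1) a).E) (x y : Option (Fin (m + 1))) : Prop :=
  ∃ e ∈ T, (WMG.fanGraph (m + 1) a).ends e = (x, y) ∨ (WMG.fanGraph (m + 1) a).ends e = (y, x)

lemma rel_symm {T : Finset (WMG.fanGraph (m + 1) a).E} : Symmetric (Rel T) := by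
  rintro x y ⟨e, he, h⟩
  exact ⟨e, he, h.symm⟩

lemma reach_right (f : Fin (m + 1) → Fin a ⊕ Bool) (hf : Good f) :
    ∀ (s : ℕ) (i : Fin (m + 1)), m ≤ i.1 + s → f i ≠ Sum.inr false →
      Relation.ReflTransGen (Rel (treeE f)) (some i) none := by
  intro s
  induction s with
  | zero =>
    intro i hsi hL
    rcases hv : f i with j | b
    · exact Relation.ReflTransGen.single
        ⟨Sum.inr ⟨i, j⟩, mem_treeE_inr.2 hv, Or.inr (fan_ends_inr _)⟩
    · cases b
      · exact absurd hv hL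
      · have : i = Fin.last m := Fin.ext (by have := i.2; simp; omega)
        rw [this] at hv
        exact absurd hv hf.2
  | succ s ih =>
    intro i hsi hL
    rcases hv : f i with j | b
    · exact Relation.ReflTransGen.single
        ⟨Sum.inr ⟨i, j⟩, mem_treeE_inr.2 hv, Or.inr (fan_ends_inr _)⟩
    · cases b
      · exact absurd hv hL
      · have him : i.1 < m := by
          have h2 : i.1 ≠ m := by
            intro h0
            exact hf.2 (by rw [← show i = Fin.last m from Fin.ext (by simpa using h0)]; exact hv)
          have := i.2
          omega
        have hcs : Fin.castSucc ⟨i.1, him⟩ = i := Fin.ext (by simp)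
        have hmem : (Sum.inl ⟨i.1, him⟩ : (WMG.fanGraph (m + 1) a).E) ∈ treeE f :=
          mem_treeE_inl.2 (Or.inl (by rw [hcs]; exact hv))
        have hstep : Rel (treeE f) (some i) (some (Fin.succ ⟨i.1, him⟩)) :=
          ⟨Sum.inl ⟨i.1, him⟩, hmem, Or.inl (by rw [fan_ends_inl, hcs])⟩
        have hnl : f (Fin.succ ⟨i.1, him⟩) ≠ Sum.inr false := by
          intro hc
          exact hf.1.2 ⟨i.1, him⟩ ⟨by rw [hcs]; exact hv, hc⟩
        exact Relation.ReflTransGen.head hstep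
          (ih (Fin.succ ⟨i.1, him⟩) (by simp; omega) hnl)

lemma reach_none (f : Fin (m + 1) → Fin a ⊕ Bool) (hf : Good f) :
    ∀ (s : ℕ) (i : Fin (m + 1)), i.1 ≤ s →
      Relation.ReflTransGen (Rel (treeE f)) (some i) none := by
  intro s
  induction s with
  | zero =>
    intro i hi
    refine reach_right f hf (m + 1) i (by omega) ?_
    rw [show i = 0 from Fin.ext (by simp only [Fin.val_zero]; omega)]
    exact hf.1.1
  | succ s ih =>
    intro i hi
    by_cases hL : f i = Sum.inr false
    · have hi0 : i.1 ≠ 0 := by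
        intro h0
        exact hf.1.1 (by rw [← show i = 0 from Fin.ext h0]; exact hL)
      have hvm : i.1 - 1 < m := by
        have := i.2
        omega
      have hsu : Fin.succ ⟨i.1 - 1, hvm⟩ = i := Fin.ext (by simp; omega)
      have hmem : (Sum.inl ⟨i.1 - 1, hvm⟩ : (WMG.fanGraph (m + 1) a).E) ∈ treeE f :=
        mem_treeE_inl.2 (Or.inr (by rw [hsu]; exact hL))
      have hstep : Rel (treeE f) (some i) (some (Fin.castSucc ⟨i.1 - 1, hvm⟩)) :=
        ⟨Sum.inl ⟨i.1 - 1, hvm⟩, hmem, Or.inr (by rw [fan_ends_inl, hsu])⟩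
      exact Relation.ReflTransGen.head hstep
        (ih (Fin.castSucc ⟨i.1 - 1, hvm⟩) (by simp; omega))
    · exact reach_right f hf (m + 1) i (by omega) hL

lemma treeE_spanning (f : Fin (m + 1) → Fin a ⊕ Bool) (hf : Good f) :
    (WMG.fanGraph (m + 1) a).IsSpanningTree (treeE f) := by
  constructor
  · intro u v
    have key : ∀ w : Option (Fin (m + 1)),
        Relation.ReflTransGen (Rel (treeE f)) w none := by
      intro w
      match w with
      | none => exact Relation.ReflTransGen.refl
      | some i => exact reach_none f hf m i (by have := i.2; omega)
    have hsym : Symmetric (Relation.ReflTransGen (Rel (treeE f))) :=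
      fun x y h => (@Relation.ReflTransGen.stdSymm _ _ ⟨fun x y h => rel_symm h⟩).symm x y h
    exact Relation.ReflTransGen.trans (key u) (hsym (key v))
  · rw [treeE_card hf, fan_card_V]
    omega

lemma noflip (f g : Fin (m + 1) → Fin a ⊕ Bool) (hf : Good f) (hg : Good g)
    (hT : treeE f = treeE g) :
    ∀ (s : ℕ) (i : Fin (m + 1)), m ≤ i.1 + s →
      ¬(f i = Sum.inr true ∧ g i = Sum.inr false) := by
  intro s
  induction s with
  | zero =>
    rintro i hsi ⟨hfR, hgL⟩
    exact hf.2 (by rw [← show i = Fin.last m from Fin.ext (by have := i.2; simp; omega)]; exact hfR)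
  | succ s ih =>
    rintro i hsi ⟨hfR, hgL⟩
    have him : i.1 < m := by
      have h2 : i.1 ≠ m := by
        intro h0
        exact hf.2 (by rw [← show i = Fin.last m from Fin.ext (by simpa using h0)]; exact hfR)
      have := i.2
      omega
    have hcs : Fin.castSucc ⟨i.1, him⟩ = i := Fin.ext (by simp)
    have hmemf : (Sum.inl ⟨i.1, him⟩ : (WMG.fanGraph (m + 1) a).E) ∈ treeE f :=
      mem_treeE_inl.2 (Or.inl (by rw [hcs]; exact hfR))
    have hmemg : (Sum.inl ⟨i.1, him⟩ : (WMG.fanGraph (m + 1) a).E) ∈ treeE g := hT ▸ hmemf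
    have hgsucc : g (Fin.succ ⟨i.1, him⟩) = Sum.inr false := by
      rcases mem_treeE_inl.1 hmemg with h | h
      · rw [hcs, hgL] at h
        simp at h
      · exact h
    have hfsucc : f (Fin.succ ⟨i.1, him⟩) = Sum.inr true := by
      rcases hv : f (Fin.succ ⟨i.1, him⟩) with j | b
      · have hsp : (Sum.inr ⟨Fin.succ ⟨i.1, him⟩, j⟩ : (WMG.fanGraph (m + 1) a).E) ∈ treeE f :=
          mem_treeE_inr.2 hv
        rw [hT] at hsp
        have h2 := mem_treeE_inr.1 hsp
        rw [hgsucc] at h2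
        simp at h2
      · cases b
        · exact absurd ⟨by rw [hcs]; exact hfR, hv⟩ (hf.1.2 ⟨i.1, him⟩)
        · rfl
    exact ih (Fin.succ ⟨i.1, him⟩) (by simp; omega) ⟨hfsucc, hgsucc⟩

lemma treeE_inj {f g : Fin (m + 1) → Fin a ⊕ Bool} (hf : Good f) (hg : Good g)
    (hT : treeE f = treeE g) : f = g := by
  funext i
  rcases hfv : f i with j | b
  · have h1 : (Sum.inr ⟨i, j⟩ : (WMG.fanGraph (m + 1) a).E) ∈ treeE f := mem_treeE_inr.2 hfv
    rw [hT] at h1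
    exact (mem_treeE_inr.1 h1).symm
  · rcases hgv : g i with j' | b'
    · have h1 : (Sum.inr ⟨i, j'⟩ : (WMG.fanGraph (m + 1) a).E) ∈ treeE g := mem_treeE_inr.2 hgv
      rw [← hT] at h1
      have h2 := mem_treeE_inr.1 h1
      rw [hfv] at h2
      simp at h2
    · cases b <;> cases b'
      · rfl
      · exact absurd ⟨hgv, hfv⟩ (noflip g f hg hf hT.symm m i (by omega))
      · exact absurd ⟨hfv, hgv⟩ (noflip f g hf hg hT m i (by omega))
      · rfl

/-- walks of exact length `k` to the hub -/
def st (T : Finset (WMG.fanGraph (m + 1) a).E) : ℕ → Option (Fin (m + 1)) → Prop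
  | 0, v => v = none
  | k + 1, v => ∃ w, Rel T v w ∧ st T k w

lemma st_exists (T : Finset (WMG.fanGraph (m + 1) a).E)
    (hconn : ∀ u v : (WMG.fanGraph (m + 1) a).V,
      Relation.ReflTransGen
        (fun x y => ∃ e ∈ T, (WMG.fanGraph (m + 1) a).ends e = (x, y) ∨
          (WMG.fanGraph (m + 1) a).ends e = (y, x)) u v)
    (v : Option (Fin (m + 1))) : ∃ k, st T k v := by
  have h : Relation.ReflTransGen (Rel T) v none := hconn v none
  induction h using Relation.ReflTransGen.head_induction_on with
  | refl => exact ⟨0, rfl⟩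
  | head hstep _ ih =>
    obtain ⟨k, hk⟩ := ih
    exact ⟨k + 1, _, hstep, hk⟩

lemma treeE_surj (T : Finset (WMG.fanGraph (m + 1) a).E)
    (hT : (WMG.fanGraph (m + 1) a).IsSpanningTree T) :
    ∃ f : Fin (m + 1) → Fin a ⊕ Bool, Good f ∧ treeE f = T := by
  obtain ⟨hconn, hcard⟩ := hT
  have hex : ∀ v : Option (Fin (m + 1)), ∃ k, st T k v := st_exists T hconn
  set d : Option (Fin (m + 1)) → ℕ := fun v => Nat.find (hex v) with hd
  have hsel : ∀ i : Fin (m + 1), ∃ e, e ∈ T ∧ ∃ w,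
      ((WMG.fanGraph (m + 1) a).ends e = (some i, w) ∨
        (WMG.fanGraph (m + 1) a).ends e = (w, some i)) ∧ d w < d (some i) := by
    intro i
    have hsp := Nat.find_spec (hex (some i))
    rcases hd0 : Nat.find (hex (some i)) with _ | k
    · rw [hd0] at hsp
      exact absurd hsp (by simp [st])
    · rw [hd0] at hsp
      obtain ⟨w, ⟨e, he, hor⟩, hst⟩ := hsp
      refine ⟨e, he, w, hor, ?_⟩
      have h1 : d w ≤ k := Nat.find_min' (hex w) hst
      have h2 : d (some i) = k + 1 := hd0
      omega
  choose eF heT wF hor hdlt using hsel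
  -- classify the chosen edges
  have hS : ∀ (i : Fin (m + 1)) (s : Σ _ : Fin (m + 1), Fin a),
      eF i = Sum.inr s → s.1 = i ∧ wF i = none := by
    intro i s h
    have ho := hor i
    rw [h, fan_ends_inr] at ho
    rcases ho with h1 | h1
    · replace h1 := Prod.ext_iff.1 h1
      exact absurd h1.1 (by simp)
    · replace h1 := Prod.ext_iff.1 h1
      exact ⟨Option.some_injective _ h1.2, h1.1.symm⟩
  have hRc : ∀ (i : Fin (m + 1)) (k : Fin m),
      eF i = Sum.inl k → k.1 = i.1 → wF i = some k.succ ∧ i = k.castSucc := by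
    intro i k h hk
    have ho := hor i
    rw [h] at ho
    replace ho : (some k.castSucc, some k.succ) = (some i, wF i) ∨
        (some k.castSucc, some k.succ) = (wF i, some i) := ho
    rcases ho with h1 | h1
    · replace h1 := Prod.ext_iff.1 h1
      exact ⟨h1.2.symm, (Option.some_injective _ h1.1).symm⟩
    · replace h1 := Prod.ext_iff.1 h1
      have h2 := Option.some_injective _ h1.2
      have h3 := congrArg Fin.val h2
      simp at h3
      omega
  have hLc : ∀ (i : Fin (m + 1)) (k : Fin m),
      eF i = Sum.inl k → k.1 ≠ i.1 → wF i = some k.castSucc ∧ i = k.succ := by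
    intro i k h hk
    have ho := hor i
    rw [h] at ho
    replace ho : (some k.castSucc, some k.succ) = (some i, wF i) ∨
        (some k.castSucc, some k.succ) = (wF i, some i) := ho
    rcases ho with h1 | h1
    · replace h1 := Prod.ext_iff.1 h1
      have h2 := Option.some_injective _ h1.1
      have h3 := congrArg Fin.val h2
      simp at h3
      exact absurd h3 hk
    · replace h1 := Prod.ext_iff.1 h1
      exact ⟨h1.1.symm, (Option.some_injective _ h1.2).symm⟩
  set f : Fin (m + 1) → Fin a ⊕ Bool := fun i =>
    match eF i with
    | Sum.inl k => if k.1 = i.1 then Sum.inr true else Sum.inr false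
    | Sum.inr s => Sum.inl s.2
    with hfdef
  have hf_inl : ∀ (i : Fin (m + 1)) (k : Fin m), eF i = Sum.inl k →
      f i = if k.1 = i.1 then Sum.inr true else Sum.inr false := by
    intro i k h
    rw [hfdef]
    simp only []
    rw [h]
  have hf_inr : ∀ (i : Fin (m + 1)) (s : Σ _ : Fin (m + 1), Fin a), eF i = Sum.inr s →
      f i = Sum.inl s.2 := by
    intro i s h
    rw [hfdef]
    simp only []
    rw [h]
  -- characterize f values
  have hfR : ∀ i : Fin (m + 1), f i = Sum.inr true →
      ∃ k : Fin m, eF i = Sum.inl k ∧ i = k.castSucc ∧ d (some k.succ) < d (some i) := by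
    intro i hv
    rcases he : eF i with k | s
    · rw [hf_inl i k he] at hv
      split_ifs at hv with hk
      · obtain ⟨hw, hic⟩ := hRc i k he hk
        refine ⟨k, rfl, hic, ?_⟩
        have := hdlt i
        rwa [hw] at this
      · simp at hv
    · rw [hf_inr i s he] at hv
      simp at hv
  have hfL : ∀ i : Fin (m + 1), f i = Sum.inr false →
      ∃ k : Fin m, eF i = Sum.inl k ∧ i = k.succ ∧ d (some k.castSucc) < d (some i) := by
    intro i hv
    rcases he : eF i with k | s
    · rw [hf_inl i k he] at hv
      split_ifs at hv with hk
      · simp at hv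
      · obtain ⟨hw, hic⟩ := hLc i k he hk
        refine ⟨k, rfl, hic, ?_⟩
        have := hdlt i
        rwa [hw] at this
    · rw [hf_inr i s he] at hv
      simp at hv
  have hGood : Good f := by
    refine ⟨⟨?_, ?_⟩, ?_⟩
    · intro hc
      obtain ⟨k, -, h0, -⟩ := hfL 0 hc
      have := congrArg Fin.val h0
      simp at this
    · rintro i ⟨hiR, hiL⟩
      obtain ⟨k1, -, hic1, hd1⟩ := hfR i.castSucc hiR
      obtain ⟨k2, -, hic2, hd2⟩ := hfL i.succ hiL
      have hv1 : k1.1 = i.1 := by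
        have := congrArg Fin.val hic1
        simpa using this.symm
      have hv2 : k2.1 = i.1 := by
        have := congrArg Fin.val hic2
        simp at this
        omega
      have he1 : k1.succ = i.succ := Fin.ext (by simp [hv1])
      have he2 : k2.castSucc = i.castSucc := Fin.ext (by simp [hv2])
      rw [he1] at hd1
      rw [he2] at hd2
      omega
    · intro hc
      obtain ⟨k, -, hic, -⟩ := hfR (Fin.last m) hc
      have := congrArg Fin.val hic
      simp at this
      have := k.2
      omega
  refine ⟨f, hGood, ?_⟩
  apply Finset.eq_of_subset_of_card_le
  · intro e he
    have hmem := mem_treeE.1 he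
    match e with
    | Sum.inl k =>
      rcases (hmem : f k.castSucc = Sum.inr true ∨ f k.succ = Sum.inr false) with h | h
      · obtain ⟨k', hk', hic, -⟩ := hfR k.castSucc h
        have : k' = k := by
          have := congrArg Fin.val hic
          simp at this
          exact Fin.ext this.symm
        subst this
        exact (congrArg (· ∈ T) hk').mp (heT _)
      · obtain ⟨k', hk', hic, -⟩ := hfL k.succ h
        have : k' = k := by
          have := congrArg Fin.val hic
          simp only [Fin.val_succ] at this
          exact Fin.ext (Nat.succ_injective this).symm
        subst this
        exact (congrArg (· ∈ T) hk').mp (heT _)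
    | Sum.inr ⟨i0, j0⟩ =>
      have h : f i0 = Sum.inl j0 := hmem
      rcases he2 : eF i0 with k | s'
      · rw [hf_inl i0 k he2] at h
        split_ifs at h <;> simp at h
      · obtain ⟨i1, j1⟩ := s'
        rw [hf_inr i0 ⟨i1, j1⟩ he2] at h
        simp only [Sum.inl.injEq] at h
        obtain ⟨h1, -⟩ := hS i0 ⟨i1, j1⟩ he2
        have h1' : i1 = i0 := h1
        have h' : j1 = j0 := h
        subst h1'
        subst h'
        rw [← he2]
        exact heT _
  · rw [treeE_card hGood, hcard, fan_card_V]
    omega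

lemma t_fan (a m : ℕ) :
    (WMG.fanGraph (m + 1) a).t = Fintype.card {f : Fin (m + 1) → Fin a ⊕ Bool // Good f} := by
  rw [WMG.t]
  rw [Nat.card_eq_fintype_card]
  symm
  apply Fintype.card_of_bijective
    (f := fun p : {f : Fin (m + 1) → Fin a ⊕ Bool // Good f} =>
      (⟨treeE p.1, treeE_spanning p.1 p.2⟩ :
        {T : Finset (WMG.fanGraph (m + 1) a).E // (WMG.fanGraph (m + 1) a).IsSpanningTree T}))
  constructor
  · rintro ⟨f, hf⟩ ⟨g, hg⟩ h
    simp only [Subtype.mk.injEq] at h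
    exact Subtype.ext (treeE_inj hf hg h)
  · rintro ⟨T, hT⟩
    obtain ⟨f, hGood, hEq⟩ := treeE_surj T hT
    exact ⟨⟨f, hGood⟩, Subtype.ext hEq⟩

end Graph


end FanProof

/-- For integers `a ≥ 1` and `n ≥ 2`, the modified fan graph satisfies
`t(F̄an_n) = a ⬝ B_{n-1}(a)` where `B_m` is the `m`-th Morgan–Voyce polynomial;
in particular `t(Fan_n) = F_{2n}` (the `2n`-th Fibonacci number). -/
theorem spanning_trees_of_fan (n a : ℕ) (hn : 2 ≤ n) (ha : 1 ≤ a) :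
    ((WMG.fanGraph n a).t : ℝ) = (a : ℝ) * morganVoyce (n - 1) (a : ℝ) ∧
    (WMG.fanGraph n 1).t = Nat.fib (2 * n) := by
  obtain ⟨m, rfl⟩ : ∃ m, n = m + 1 := ⟨n - 1, by omega⟩
  have key : ∀ b : ℕ, (WMG.fanGraph (m + 1) b).t = b * (FanProof.BB b m).1 := fun b =>
    (FanProof.t_fan b m).trans (FanProof.NC_NR_eq b m).1
  constructor
  · rw [key a, show m + 1 - 1 = m from rfl, FanProof.mv_BB]
    push_cast
    ring
  · rw [key 1, one_mul, (FanProof.BB_one m).1]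
    congr 1
end
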